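/- arXiv:2007.00674 — 9 statements merged into one kernel-verified Lean document; each statement's English description precedes it below -/
import Mathlib

section
/- For any Borel probability measures μ, ν on ℝ^d with finite p-th moments (p ∈ [1, ∞)) and any 1 ≤ K ≤ d, the maximum K-sliced p-Wasserstein distance is bounded below by (1/K)^{1/p} times the maximum sliced p-Wasserstein distance: (1/K)^{1/p} · max-SW_p(μ, ν) ≤ max-K-SW_p(μ, ν). -/
open MeasureTheory ENNReal
open scoped RealInnerProductSpace

/-- The p-Wasserstein distance between Borel probability measures on ℝ,
defined as the infimum of transport cost over couplings. -/
noncomputable def Wp (p : ℝ) (μ ν : Measure ℝ) : ℝ≥0∞ :=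
  ⨅ γ ∈ {γ : Measure (ℝ × ℝ) | γ.map Prod.fst = μ ∧ γ.map Prod.snd = ν},
    (∫⁻ q, ENNReal.ofReal (|q.1 - q.2| ^ p) ∂γ) ^ (1 / p)

/-- The sliceMeasure of a measure on ℝ^d along direction θ:
the pushforward under x ↦ ⟨x, θ⟩. -/
noncomputable def sliceMeasure {d : ℕ} (μ : Measure (EuclideanSpace ℝ (Fin d)))
    (θ : EuclideanSpace ℝ (Fin d)) : Measure ℝ :=
  μ.map (fun x => ⟪x, θ⟫)

/-- The maximum K-sliced p-Wasserstein distance: the supremum over orthonormal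
families (θ₁, …, θ_K) of ((1/K) Σ_k W_p(μ_{θ_k}, ν_{θ_k})^p)^{1/p}. -/
noncomputable def maxKSW (p : ℝ) {d : ℕ} (K : ℕ)
    (μ ν : Measure (EuclideanSpace ℝ (Fin d))) : ℝ≥0∞ :=
  ⨆ θ ∈ {θ : Fin K → EuclideanSpace ℝ (Fin d) | Orthonormal ℝ θ},
    (((K : ℝ≥0∞))⁻¹ * ∑ k, (Wp p (sliceMeasure μ (θ k)) (sliceMeasure ν (θ k))) ^ p) ^ (1 / p)

/-- The maximum sliced p-Wasserstein distance: the supremum over unit vectors θ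
of W_p(μ_θ, ν_θ). -/
noncomputable def maxSW (p : ℝ) {d : ℕ}
    (μ ν : Measure (EuclideanSpace ℝ (Fin d))) : ℝ≥0∞ :=
  ⨆ θ ∈ {θ : EuclideanSpace ℝ (Fin d) | ‖θ‖ = 1}, Wp p (sliceMeasure μ θ) (sliceMeasure ν θ)

/-- A measure on ℝ^d has finite p-th moment. -/
def FiniteMoment (p : ℝ) {d : ℕ}
    (μ : Measure (EuclideanSpace ℝ (Fin d))) : Prop :=
  ∫⁻ x, ENNReal.ofReal (‖x‖ ^ p) ∂μ < ⊤

/-- The maximum K-sliced p-Wasserstein distance is bounded below by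
(1/K)^{1/p} times the maximum sliced p-Wasserstein distance. -/
theorem maxKSW_ge_maxSW {d K : ℕ} (p : ℝ) (hp : 1 ≤ p) (hK : 1 ≤ K) (hKd : K ≤ d)
    (μ ν : Measure (EuclideanSpace ℝ (Fin d)))
    [IsProbabilityMeasure μ] [IsProbabilityMeasure ν]
    (hμ : FiniteMoment p μ) (hν : FiniteMoment p ν) :
    ((K : ℝ≥0∞))⁻¹ ^ (1 / p) * maxSW p μ ν ≤ maxKSW p K μ ν := by
  have hp0 : p ≠ 0 := by linarith
  have hp0' : (0 : ℝ) ≤ 1 / p := by positivity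
  rw [maxSW]
  simp_rw [ENNReal.mul_iSup]
  refine iSup₂_le fun θ hθ => ?_
  have hθ' : ‖θ‖ = 1 := hθ
  have h0d : 0 < d := lt_of_lt_of_le hK hKd
  have hcard : Module.finrank ℝ (EuclideanSpace ℝ (Fin d)) = Fintype.card (Fin d) := by
    simp
  have hon : Orthonormal ℝ
      (Set.restrict ({(⟨0, h0d⟩ : Fin d)} : Set (Fin d))
        (fun _ => θ : Fin d → EuclideanSpace ℝ (Fin d))) := by
    rw [orthonormal_iff_ite]
    rintro ⟨i, hi⟩ ⟨j, hj⟩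
    simp only [Set.mem_singleton_iff] at hi hj
    subst hi; subst hj
    rw [if_pos rfl, real_inner_self_eq_norm_sq]
    show ‖θ‖ ^ 2 = 1
    rw [hθ', one_pow]
  obtain ⟨b, hb⟩ := hon.exists_orthonormalBasis_extension_of_card_eq hcard
  set Θ : Fin K → EuclideanSpace ℝ (Fin d) := fun k => b (Fin.castLE hKd k) with hΘdef
  have hΘ : Orthonormal ℝ Θ := b.orthonormal.comp _ (Fin.castLE_injective hKd)
  have h0 : Θ ⟨0, hK⟩ = θ := hb _ rfl
  have key : (((K : ℝ≥0∞))⁻¹ *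
      ∑ k, (Wp p (sliceMeasure μ (Θ k)) (sliceMeasure ν (Θ k))) ^ p) ^ (1 / p)
      ≤ maxKSW p K μ ν := by
    rw [maxKSW]
    exact le_biSup
      (fun Θ' : Fin K → EuclideanSpace ℝ (Fin d) =>
        (((K : ℝ≥0∞))⁻¹ *
          ∑ k, (Wp p (sliceMeasure μ (Θ' k)) (sliceMeasure ν (Θ' k))) ^ p) ^ (1 / p)) hΘ
  refine le_trans ?_ key
  calc ((K : ℝ≥0∞))⁻¹ ^ (1 / p) * Wp p (sliceMeasure μ θ) (sliceMeasure ν θ)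
      = ((K : ℝ≥0∞)⁻¹ * Wp p (sliceMeasure μ θ) (sliceMeasure ν θ) ^ p) ^ (1 / p) := by
        rw [ENNReal.mul_rpow_of_nonneg _ _ hp0', ← ENNReal.rpow_mul,
          mul_one_div_cancel hp0, ENNReal.rpow_one]
    _ ≤ ((K : ℝ≥0∞)⁻¹ *
          ∑ k, Wp p (sliceMeasure μ (Θ k)) (sliceMeasure ν (Θ k)) ^ p) ^ (1 / p) := by
        refine ENNReal.rpow_le_rpow (mul_le_mul_right ?_ _) hp0'
        rw [← h0]
        exact Finset.single_le_sum
          (f := fun k => Wp p (sliceMeasure μ (Θ k)) (sliceMeasure ν (Θ k)) ^ p)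
          (fun _ _ => zero_le) (Finset.mem_univ (⟨0, hK⟩ : Fin K))
end

section
/- For p ∈ [1, ∞) and 1 ≤ K ≤ d, the maximum K-sliced p-Wasserstein distance is a metric on the set of Borel probability measures on ℝ^d with finite p-th moments: it is nonnegative, symmetric, satisfies the triangle inequality, and max-K-SW_p(μ, ν) = 0 if and only if μ = ν. -/
open MeasureTheory ENNReal
open scoped RealInnerProductSpace

open ProbabilityTheory Filter
open scoped Manifold ContDiff

section WassersteinAux


namespace WpAux

variable {p : ℝ}

lemma cost_eq (hp : 0 ≤ p) (γ : Measure (ℝ × ℝ)) :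
    (∫⁻ q, ENNReal.ofReal (|q.1 - q.2| ^ p) ∂γ) = ∫⁻ q, (edist q.1 q.2) ^ p ∂γ := by
  congr 1; funext q
  rw [edist_dist, Real.dist_eq, ENNReal.ofReal_rpow_of_nonneg (abs_nonneg _) hp]

lemma Wp_eq (hp : 0 ≤ p) (μ ν : Measure ℝ) :
    Wp p μ ν = ⨅ γ ∈ {γ : Measure (ℝ × ℝ) | γ.map Prod.fst = μ ∧ γ.map Prod.snd = ν},
      (∫⁻ q, (edist q.1 q.2) ^ p ∂γ) ^ (1 / p) := by
  unfold Wp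
  exact iInf_congr fun γ => iInf_congr fun _ => by rw [cost_eq hp]

lemma coupling_nonempty (μ ν : Measure ℝ) [IsProbabilityMeasure μ] [IsProbabilityMeasure ν] :
    (μ.prod ν).map Prod.fst = μ ∧ (μ.prod ν).map Prod.snd = ν := by
  constructor
  · rw [← Measure.fst, Measure.fst_prod]
  · rw [← Measure.snd, Measure.snd_prod]

lemma coupling_prob {γ : Measure (ℝ × ℝ)} {μ ν : Measure ℝ} [IsProbabilityMeasure μ]
    (h : γ.map Prod.fst = μ ∧ γ.map Prod.snd = ν) : IsProbabilityMeasure γ := by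
  constructor
  have := congrArg (fun m : Measure ℝ => m Set.univ) h.1
  simp only [Measure.map_apply measurable_fst MeasurableSet.univ, Set.preimage_univ] at this
  rw [this]; exact measure_univ

lemma Wp_comm (hp : 0 ≤ p) (μ ν : Measure ℝ) : Wp p μ ν = Wp p ν μ := by
  have key : ∀ ρ σ : Measure ℝ, Wp p ρ σ ≤ Wp p σ ρ := by
    intro ρ σ
    rw [Wp_eq hp, Wp_eq hp]
    refine le_iInf₂ fun γ hγ => ?_
    have h1 : (γ.map Prod.swap).map Prod.fst = ρ := by
      rw [Measure.map_map measurable_fst measurable_swap]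
      exact hγ.2
    have h2 : (γ.map Prod.swap).map Prod.snd = σ := by
      rw [Measure.map_map measurable_snd measurable_swap]
      exact hγ.1
    refine iInf₂_le_of_le (γ.map Prod.swap) ⟨h1, h2⟩ (le_of_eq ?_)
    congr 1
    rw [lintegral_map (by fun_prop) measurable_swap]
    simp [edist_comm]
  exact le_antisymm (key μ ν) (key ν μ)

lemma Wp_self (hp : 1 ≤ p) (μ : Measure ℝ) : Wp p μ μ = 0 := by
  have hp0 : (0:ℝ) < p := lt_of_lt_of_le one_pos hp
  have hdiag : (μ.map (fun x => (x, x))).map Prod.fst = μ ∧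
      (μ.map (fun x => (x, x))).map Prod.snd = μ := by
    constructor <;>
    · rw [Measure.map_map (by fun_prop) (by fun_prop)]
      simp [Function.comp_def]
  refine le_antisymm ?_ zero_le
  refine iInf₂_le_of_le _ hdiag (le_of_eq ?_)
  have : (∫⁻ q : ℝ × ℝ, ENNReal.ofReal (|q.1 - q.2| ^ p) ∂(μ.map (fun x => (x, x)))) = 0 := by
    rw [lintegral_map (by fun_prop) (by fun_prop)]
    simp [Real.zero_rpow (ne_of_gt hp0)]
  rw [this, ENNReal.zero_rpow_of_pos (by positivity)]



end WpAux

namespace WpAux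
variable {p : ℝ}

lemma map_compProd_fst (μ : Measure ℝ) [SFinite μ] (κ : Kernel ℝ (ℝ × ℝ)) [IsSFiniteKernel κ] :
    (μ ⊗ₘ κ).map (fun q : ℝ × ℝ × ℝ => (q.1, q.2.1)) = μ ⊗ₘ κ.fst := by
  ext s hs
  rw [Measure.map_apply (by fun_prop) hs, Measure.compProd_apply ((by fun_prop : Measurable
    (fun q : ℝ × ℝ × ℝ => (q.1, q.2.1))) hs), Measure.compProd_apply hs]
  refine lintegral_congr fun a => ?_
  rw [Kernel.fst_apply' _ _ (measurable_prodMk_left hs)]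
  rfl

lemma map_compProd_snd (μ : Measure ℝ) [SFinite μ] (κ : Kernel ℝ (ℝ × ℝ)) [IsSFiniteKernel κ] :
    (μ ⊗ₘ κ).map (fun q : ℝ × ℝ × ℝ => (q.1, q.2.2)) = μ ⊗ₘ κ.snd := by
  ext s hs
  rw [Measure.map_apply (by fun_prop) hs, Measure.compProd_apply ((by fun_prop : Measurable
    (fun q : ℝ × ℝ × ℝ => (q.1, q.2.2))) hs), Measure.compProd_apply hs]
  refine lintegral_congr fun a => ?_
  rw [Kernel.snd_apply' _ _ (measurable_prodMk_left hs)]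
  rfl

lemma Wp_triangle (hp : 1 ≤ p) (μ₁ μ₂ μ₃ : Measure ℝ) [IsProbabilityMeasure μ₁]
    [IsProbabilityMeasure μ₂] [IsProbabilityMeasure μ₃] :
    Wp p μ₁ μ₃ ≤ Wp p μ₁ μ₂ + Wp p μ₂ μ₃ := by
  have hp' : (0:ℝ) ≤ p := le_trans zero_le_one hp
  have main : ∀ γ ∈ {γ : Measure (ℝ × ℝ) | γ.map Prod.fst = μ₁ ∧ γ.map Prod.snd = μ₂},
      ∀ γ' ∈ {γ : Measure (ℝ × ℝ) | γ.map Prod.fst = μ₂ ∧ γ.map Prod.snd = μ₃},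
      Wp p μ₁ μ₃ ≤ (∫⁻ q, (edist q.1 q.2) ^ p ∂γ) ^ (1/p) +
        (∫⁻ q, (edist q.1 q.2) ^ p ∂γ') ^ (1/p) := by
    intro γ hγ γ' hγ'
    haveI : IsProbabilityMeasure γ := coupling_prob hγ
    haveI : IsProbabilityMeasure γ' := coupling_prob hγ'
    set ρ : Measure (ℝ × ℝ) := γ.map Prod.swap with hρ_def
    haveI : IsProbabilityMeasure ρ := Measure.isProbabilityMeasure_map measurable_swap.aemeasurable
    have hρfst : ρ.fst = μ₂ := by
      rw [Measure.fst, hρ_def, Measure.map_map measurable_fst measurable_swap]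
      exact hγ.2
    have hγ'fst : γ'.fst = μ₂ := hγ'.1
    set κ : Kernel ℝ ℝ := ρ.condKernel with hκ_def
    set η : Kernel ℝ ℝ := γ'.condKernel with hη_def
    have hρdis : μ₂ ⊗ₘ κ = ρ := by rw [← hρfst]; exact ρ.disintegrate _
    have hγ'dis : μ₂ ⊗ₘ η = γ' := by rw [← hγ'fst]; exact γ'.disintegrate _
    set m : Measure (ℝ × ℝ × ℝ) := μ₂ ⊗ₘ (κ ×ₖ η) with hm_def
    have h12 : m.map (fun q : ℝ × ℝ × ℝ => (q.1, q.2.1)) = ρ := by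
      rw [hm_def, map_compProd_fst, Kernel.fst_prod, hρdis]
    have h23 : m.map (fun q : ℝ × ℝ × ℝ => (q.1, q.2.2)) = γ' := by
      rw [hm_def, map_compProd_snd, Kernel.snd_prod, hγ'dis]
    have h12' : m.map (fun q : ℝ × ℝ × ℝ => (q.2.1, q.1)) = γ := by
      have e : (fun q : ℝ × ℝ × ℝ => (q.2.1, q.1)) =
          (Prod.swap ∘ fun q : ℝ × ℝ × ℝ => (q.1, q.2.1)) := rfl
      rw [e, ← Measure.map_map measurable_swap (by fun_prop), h12, hρ_def,
        Measure.map_map measurable_swap measurable_swap, Prod.swap_swap_eq, Measure.map_id]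
    set Γ : Measure (ℝ × ℝ) := m.map (fun q : ℝ × ℝ × ℝ => (q.2.1, q.2.2)) with hΓ_def
    have e1 : Γ.map Prod.fst = μ₁ := by
      rw [hΓ_def, Measure.map_map measurable_fst (by fun_prop)]
      have e : (Prod.fst ∘ fun q : ℝ × ℝ × ℝ => (q.2.1, q.2.2)) =
          (Prod.fst ∘ fun q : ℝ × ℝ × ℝ => (q.2.1, q.1)) := rfl
      rw [e, ← Measure.map_map measurable_fst (by fun_prop), h12']
      exact hγ.1
    have e2 : Γ.map Prod.snd = μ₃ := by
      rw [hΓ_def, Measure.map_map measurable_snd (by fun_prop)]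
      have e : (Prod.snd ∘ fun q : ℝ × ℝ × ℝ => (q.2.1, q.2.2)) =
          (Prod.snd ∘ fun q : ℝ × ℝ × ℝ => (q.1, q.2.2)) := rfl
      rw [e, ← Measure.map_map measurable_snd (by fun_prop), h23]
      exact hγ'.2
    calc Wp p μ₁ μ₃ ≤ (∫⁻ q, (edist q.1 q.2) ^ p ∂Γ) ^ (1/p) := by
          rw [Wp_eq hp']
          exact iInf₂_le Γ ⟨e1, e2⟩
      _ = (∫⁻ q : ℝ × ℝ × ℝ, (edist q.2.1 q.2.2) ^ p ∂m) ^ (1/p) := by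
          rw [hΓ_def, lintegral_map (by fun_prop) (by fun_prop)]
      _ ≤ (∫⁻ q : ℝ × ℝ × ℝ,
            ((fun q : ℝ × ℝ × ℝ => edist q.2.1 q.1) +
             (fun q : ℝ × ℝ × ℝ => edist q.1 q.2.2)) q ^ p ∂m)
            ^ (1/p) := by
          refine ENNReal.rpow_le_rpow (lintegral_mono fun q => ?_) (by positivity)
          refine ENNReal.rpow_le_rpow ?_ hp'
          simpa using edist_triangle q.2.1 q.1 q.2.2
      _ ≤ (∫⁻ q : ℝ × ℝ × ℝ, (edist q.2.1 q.1) ^ p ∂m) ^ (1/p) +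
          (∫⁻ q : ℝ × ℝ × ℝ, (edist q.1 q.2.2) ^ p ∂m) ^ (1/p) :=
          ENNReal.lintegral_Lp_add_le
            ((by fun_prop : Measurable (fun q : ℝ × ℝ × ℝ => edist q.2.1 q.1)).aemeasurable)
            ((by fun_prop : Measurable (fun q : ℝ × ℝ × ℝ => edist q.1 q.2.2)).aemeasurable) hp
      _ = (∫⁻ q, (edist q.1 q.2) ^ p ∂γ) ^ (1/p) + (∫⁻ q, (edist q.1 q.2) ^ p ∂γ') ^ (1/p) := by
          congr 1
          · rw [← h12', lintegral_map (by fun_prop) (by fun_prop)]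
          · rw [← h23, lintegral_map (by fun_prop) (by fun_prop)]
  rw [Wp_eq hp' μ₁ μ₂, Wp_eq hp' μ₂ μ₃, iInf_subtype', iInf_subtype']
  haveI : Nonempty {γ : Measure (ℝ × ℝ) // γ ∈ {γ : Measure (ℝ × ℝ) |
      γ.map Prod.fst = μ₁ ∧ γ.map Prod.snd = μ₂}} := ⟨⟨μ₁.prod μ₂, coupling_nonempty _ _⟩⟩
  haveI : Nonempty {γ : Measure (ℝ × ℝ) // γ ∈ {γ : Measure (ℝ × ℝ) |
      γ.map Prod.fst = μ₂ ∧ γ.map Prod.snd = μ₃}} := ⟨⟨μ₂.prod μ₃, coupling_nonempty _ _⟩⟩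
  rw [ENNReal.iInf_add]
  refine le_iInf fun x => ?_
  rw [ENNReal.add_iInf]
  exact le_iInf fun y => main x.1 x.2 y.1 y.2

end WpAux


open WpAux in
section

variable {p : ℝ}

lemma tsub_le_tsub_add' {a b c e : ℝ≥0∞} (h : b ≤ a + e) : c - a ≤ (c - b) + e := by
  rcases le_total b c with hbc | hbc
  · rw [tsub_le_iff_right]
    calc c = c - b + b := (tsub_add_cancel_of_le hbc).symm
      _ ≤ c - b + (a + e) := by gcongr
      _ = c - b + e + a := by ring
  · calc c - a ≤ (a + e) - a := tsub_le_tsub (le_trans hbc h) le_rfl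
      _ ≤ (c - b) + e := le_trans (tsub_le_iff_left.mpr le_rfl) le_add_self

lemma aux_lip {δ : ℝ} (hδ : 0 < δ) (F : Set ℝ) (x y : ℝ) :
    thickenedIndicatorAux δ F x ≤ thickenedIndicatorAux δ F y + edist x y / ENNReal.ofReal δ := by
  simp only [thickenedIndicatorAux]
  refine tsub_le_tsub_add' ?_
  calc EMetric.infEdist y F / ENNReal.ofReal δ
      ≤ (EMetric.infEdist x F + edist y x) / ENNReal.ofReal δ := by
        gcongr
        exact EMetric.infEdist_le_infEdist_add_edist
    _ = EMetric.infEdist x F / ENNReal.ofReal δ + edist x y / ENNReal.ofReal δ := by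
        rw [ENNReal.add_div, edist_comm]

lemma lintegral_le_Lp (hp : 1 ≤ p) (γ : Measure (ℝ × ℝ)) [IsProbabilityMeasure γ]
    {f : ℝ × ℝ → ℝ≥0∞} (hf : Measurable f) :
    ∫⁻ q, f q ∂γ ≤ (∫⁻ q, f q ^ p ∂γ) ^ (1/p) := by
  rcases eq_or_lt_of_le hp with heq | hlt
  · simp [← heq]
  · have hpq := Real.HolderConjugate.conjExponent hlt
    have := ENNReal.lintegral_mul_le_Lp_mul_Lq γ hpq hf.aemeasurable
      (aemeasurable_const (b := (1:ℝ≥0∞)))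
    simpa [lintegral_one, measure_univ, ENNReal.one_rpow,
      ENNReal.rpow_natCast] using this

lemma coe_thickenedIndicator {δ : ℝ} (hδ : 0 < δ) (F : Set ℝ) (x : ℝ) :
    ((thickenedIndicator hδ F) x : ℝ≥0∞) = thickenedIndicatorAux δ F x := by
  rw [thickenedIndicator_apply, ENNReal.coe_toNNReal]
  exact (thickenedIndicatorAux_lt_top).ne

lemma eq_of_Wp_zero (hp : 1 ≤ p) (μ ν : Measure ℝ) [IsProbabilityMeasure μ]
    [IsProbabilityMeasure ν] (h : Wp p μ ν = 0) : μ = ν := by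
  have hp' : (0:ℝ) ≤ p := le_trans zero_le_one hp
  -- one-sided comparison of integrals of thickened indicators
  have half : ∀ (ρ σ : Measure ℝ), IsProbabilityMeasure ρ → IsProbabilityMeasure σ →
      Wp p ρ σ = 0 → ∀ {δ : ℝ} (hδ : 0 < δ) (F : Set ℝ),
      ∫⁻ x, thickenedIndicatorAux δ F x ∂ρ ≤ ∫⁻ x, thickenedIndicatorAux δ F x ∂σ := by
    intro ρ σ hρ hσ hW δ hδ F
    haveI := hρ; haveI := hσ
    set D := ENNReal.ofReal δ with hD
    have hD0 : D ≠ 0 := by simp [hD, hδ]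
    have hDt : D ≠ ⊤ := ofReal_ne_top
    have hσfin : (∫⁻ x, thickenedIndicatorAux δ F x ∂σ) ≠ ⊤ := by
      refine ne_of_lt (lt_of_le_of_lt (le_trans (lintegral_mono fun x =>
        thickenedIndicatorAux_le_one δ F x) ?_) one_lt_top)
      simp [lintegral_one, measure_univ]
    refine ENNReal.le_of_forall_pos_le_add fun ε hε hfin => ?_
    have hWeq := (WpAux.Wp_eq hp' ρ σ).symm.trans hW
    have hlt : (⨅ γ ∈ {γ : Measure (ℝ × ℝ) | γ.map Prod.fst = ρ ∧ γ.map Prod.snd = σ},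
        (∫⁻ q, (edist q.1 q.2) ^ p ∂γ) ^ (1/p)) < D * ε := by
      rw [hWeq]
      exact ENNReal.mul_pos hD0 (by exact_mod_cast hε.ne')
    simp only [iInf_lt_iff] at hlt
    obtain ⟨γ, hγS, hγc⟩ := hlt
    haveI : IsProbabilityMeasure γ := WpAux.coupling_prob hγS
    have hauxm : Measurable (thickenedIndicatorAux δ F) :=
      (continuous_thickenedIndicatorAux hδ F).measurable
    calc ∫⁻ x, thickenedIndicatorAux δ F x ∂ρ
        = ∫⁻ q : ℝ × ℝ, thickenedIndicatorAux δ F q.1 ∂γ := by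
          rw [← hγS.1, lintegral_map hauxm measurable_fst]
      _ ≤ ∫⁻ q : ℝ × ℝ, (thickenedIndicatorAux δ F q.2 + edist q.1 q.2 / D) ∂γ :=
          lintegral_mono fun q => aux_lip hδ F q.1 q.2
      _ = ∫⁻ q : ℝ × ℝ, thickenedIndicatorAux δ F q.2 ∂γ +
          (∫⁻ q : ℝ × ℝ, edist q.1 q.2 ∂γ) * D⁻¹ := by
          rw [lintegral_add_right _ (by fun_prop)]
          congr 1
          simp only [div_eq_mul_inv]
          rw [lintegral_mul_const' _ _ (by simpa using hD0)]
      _ ≤ ∫⁻ x, thickenedIndicatorAux δ F x ∂σ + ε := by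
          gcongr
          · rw [← hγS.2, lintegral_map hauxm measurable_snd]
          · have hJ : ∫⁻ q : ℝ × ℝ, edist q.1 q.2 ∂γ ≤
                (∫⁻ q : ℝ × ℝ, (edist q.1 q.2) ^ p ∂γ) ^ (1/p) :=
              lintegral_le_Lp hp γ (by fun_prop)
            calc (∫⁻ q : ℝ × ℝ, edist q.1 q.2 ∂γ) * D⁻¹
                ≤ (D * ε) * D⁻¹ := by gcongr; exact le_trans hJ hγc.le
              _ = ε := by
                  rw [mul_comm D (ε : ℝ≥0∞), mul_assoc, ENNReal.mul_inv_cancel hD0 hDt, mul_one]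
  have hW' : Wp p ν μ = 0 := by rw [WpAux.Wp_comm hp']; exact h
  have closed_eq : ∀ F : Set ℝ, IsClosed F → μ F = ν F := by
    intro F hF
    have δpos : ∀ n : ℕ, 0 < ((n:ℝ)+1)⁻¹ := fun n => by positivity
    have δlim : Filter.Tendsto (fun n : ℕ => ((n:ℝ)+1)⁻¹) Filter.atTop (nhds 0) :=
      tendsto_one_div_add_atTop_nhds_zero_nat.congr fun n => by rw [one_div]
    have t1 := tendsto_lintegral_thickenedIndicator_of_isClosed μ hF δpos δlim
    have t2 := tendsto_lintegral_thickenedIndicator_of_isClosed ν hF δpos δlim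
    have e12 : (fun n : ℕ => ∫⁻ y : ℝ, ((thickenedIndicator (δpos n) F) y : ℝ≥0∞) ∂μ)
        = fun n : ℕ => ∫⁻ y : ℝ, ((thickenedIndicator (δpos n) F) y : ℝ≥0∞) ∂ν := by
      funext n
      have em : (∫⁻ y : ℝ, ((thickenedIndicator (δpos n) F) y : ℝ≥0∞) ∂μ)
          = ∫⁻ x : ℝ, thickenedIndicatorAux ((n:ℝ)+1)⁻¹ F x ∂μ :=
        lintegral_congr fun x => coe_thickenedIndicator (δpos n) F x
      have en : (∫⁻ y : ℝ, ((thickenedIndicator (δpos n) F) y : ℝ≥0∞) ∂ν)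
          = ∫⁻ x : ℝ, thickenedIndicatorAux ((n:ℝ)+1)⁻¹ F x ∂ν :=
        lintegral_congr fun x => coe_thickenedIndicator (δpos n) F x
      rw [em, en]
      exact le_antisymm (half μ ν ‹_› ‹_› h (δpos n) F) (half ν μ ‹_› ‹_› hW' (δpos n) F)
    refine tendsto_nhds_unique t1 ?_
    rw [e12]
    exact t2
  refine ext_of_generate_finite {s : Set ℝ | IsClosed s} ?_ isPiSystem_isClosed
    (fun s hs => closed_eq s hs) (by simp [measure_univ])
  rw [BorelSpace.measurable_eq (α := ℝ)]
  exact borel_eq_generateFrom_isClosed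

end


section CramerWold
variable {d : ℕ}
local notation "Euc" => EuclideanSpace ℝ (Fin d)


noncomputable def FC (μ : Measure Euc) (w : Euc) : ℂ :=
  ∫ v, ((Real.fourierChar ⟪v, w⟫ : Circle) : ℂ) ∂μ

lemma contFC : Continuous fun q : Euc × Euc => ((Real.fourierChar ⟪q.1, q.2⟫ : Circle) : ℂ) :=
  continuous_subtype_val.comp (Real.continuous_fourierChar.comp continuous_inner)

lemma integral_schwartz_eq (μ ν : Measure Euc) [IsProbabilityMeasure μ] [IsProbabilityMeasure ν]
    (hFC : ∀ w, FC μ w = FC ν w) (f : SchwartzMap Euc ℂ) :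
    ∫ v, f v ∂μ = ∫ v, f v ∂ν := by
  set g : SchwartzMap Euc ℂ := FourierTransform.fourier f with hg
  have hginv : ∀ v, f v = ∫ w, ((Real.fourierChar ⟪v, w⟫ : Circle) : ℂ) * g w := by
    intro v
    have h1 : FourierTransformInv.fourierInv (FourierTransform.fourier (⇑f)) v = f v :=
      f.integrable.fourierInv_fourier_eq
        (by rw [← SchwartzMap.fourier_coe]; exact g.integrable)
        f.continuous.continuousAt
    rw [← h1, Real.fourierInv_eq]
    refine integral_congr_ae (Eventually.of_forall fun w => ?_)
    rw [← SchwartzMap.fourier_coe]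
    simp only [Circle.smul_def, smul_eq_mul, real_inner_comm v w]
    rfl
  have key : ∀ ρ : Measure Euc, IsProbabilityMeasure ρ →
      ∫ v, f v ∂ρ = ∫ w, FC ρ w * g w := by
    intro ρ hρ
    have hint : Integrable (Function.uncurry fun v w =>
        ((Real.fourierChar ⟪v, w⟫ : Circle) : ℂ) * g w) (ρ.prod volume) := by
      have hm : AEStronglyMeasurable (Function.uncurry fun v w =>
          ((Real.fourierChar ⟪v, w⟫ : Circle) : ℂ) * g w) (ρ.prod volume) :=
        (contFC.mul (g.continuous.comp continuous_snd)).aestronglyMeasurable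
      refine (integrable_prod_iff hm).2 ⟨Eventually.of_forall fun v => ?_, ?_⟩
      · refine Integrable.mono' g.integrable.norm
          ((contFC.mul (g.continuous.comp continuous_snd)).comp
            (Continuous.prodMk_right v)).aestronglyMeasurable
          (Eventually.of_forall fun w => ?_)
        simp [norm_mul, Circle.norm_coe]
      · refine (integrable_const (∫ w : Euc, ‖g w‖ ∂volume)).congr
          (Eventually.of_forall fun v => ?_)
        refine integral_congr_ae (Eventually.of_forall fun w => ?_)
        simp [Function.uncurry, norm_mul, Circle.norm_coe]
    calc ∫ v, f v ∂ρ = ∫ v, ∫ w, ((Real.fourierChar ⟪v, w⟫ : Circle) : ℂ) * g w ∂volume ∂ρ :=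
          integral_congr_ae (Eventually.of_forall fun v => hginv v)
      _ = ∫ w, ∫ v, ((Real.fourierChar ⟪v, w⟫ : Circle) : ℂ) * g w ∂ρ ∂volume :=
          integral_integral_swap hint
      _ = ∫ w, FC ρ w * g w := by
          refine integral_congr_ae (Eventually.of_forall fun w => ?_)
          simp only [FC]
          have hs := integral_smul_const (μ := ρ)
            (fun v => ((Real.fourierChar ⟪v, w⟫ : Circle) : ℂ)) (g w)
          simp only [smul_eq_mul] at hs
          exact hs
  rw [key μ ‹_›, key ν ‹_›]
  refine integral_congr_ae (Eventually.of_forall fun w => ?_)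
  dsimp only
  rw [hFC w]

lemma slice_meas (θ : Euc) : Measurable fun x : Euc => ⟪x, θ⟫ :=
  (continuous_id.inner continuous_const).measurable

lemma FC_eq_of_slice (μ ν : Measure Euc) [IsProbabilityMeasure μ] [IsProbabilityMeasure ν]
    (h : ∀ θ : Euc, ‖θ‖ = 1 → sliceMeasure μ θ = sliceMeasure ν θ) (w : Euc) :
    FC μ w = FC ν w := by
  by_cases hw : w = 0
  · subst hw
    simp [FC, inner_zero_right, measure_univ]
  · set θ : Euc := ‖w‖⁻¹ • w with hθdef
    have hθ : ‖θ‖ = 1 := norm_smul_inv_norm hw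
    have hcont : Continuous fun t : ℝ => ((Real.fourierChar (‖w‖ * t) : Circle) : ℂ) :=
      continuous_subtype_val.comp (Real.continuous_fourierChar.comp
        (continuous_const.mul continuous_id))
    have key : ∀ ρ : Measure Euc, FC ρ w =
        ∫ t : ℝ, ((Real.fourierChar (‖w‖ * t) : Circle) : ℂ) ∂(sliceMeasure ρ θ) := by
      intro ρ
      rw [sliceMeasure, integral_map (slice_meas θ).aemeasurable hcont.aestronglyMeasurable]
      refine integral_congr_ae (Filter.Eventually.of_forall fun v => ?_)
      have : ‖w‖ * ⟪v, θ⟫ = ⟪v, w⟫ := by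
        rw [hθdef, real_inner_smul_right, ← mul_assoc,
          mul_inv_cancel₀ (norm_ne_zero_iff.mpr hw), one_mul]
      dsimp only
      rw [this]
    rw [key μ, key ν, h θ hθ]

lemma exists_bump (K : Set Euc) (hK : IsCompact K) {δ : ℝ} (hδ : 0 < δ) :
    ∃ h : Euc → ℝ, ContDiff ℝ ∞ h ∧ HasCompactSupport h ∧ Set.EqOn h 1 K ∧
      (∀ x, h x ∈ Set.Icc (0:ℝ) 1) ∧ ∀ x ∉ Metric.thickening δ K, h x = 0 := by
  obtain ⟨f, hf0, hf1, hf01⟩ := exists_contMDiffMap_zero_one_of_isClosed (n := (⊤ : ℕ∞)) (𝓘(ℝ, Euc))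
    (Metric.isOpen_thickening (δ := δ) (E := K)).isClosed_compl hK.isClosed
    (disjoint_compl_left.mono_right (Metric.self_subset_thickening hδ K))
  have hsupp : Function.support ⇑f ⊆ Metric.thickening δ K := by
    intro x hx
    by_contra hmem
    exact hx (hf0 hmem)
  refine ⟨⇑f, contMDiff_iff_contDiff.mp f.contMDiff, ?_, hf1, hf01, fun x hx => hf0 hx⟩
  refine IsCompact.of_isClosed_subset (hK.cthickening (r := δ)) isClosed_closure ?_
  exact (closure_mono hsupp).trans (Metric.closure_thickening_subset_cthickening δ K)

noncomputable def toSchwartz (h : Euc → ℂ) (hsm : ContDiff ℝ ∞ h) (hsupp : HasCompactSupport h) :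
    SchwartzMap Euc ℂ := by
  refine ⟨h, hsm, fun k n => ?_⟩
  have hcs : HasCompactSupport fun x => ‖x‖ ^ k * ‖iteratedFDeriv ℝ n h x‖ := by
    have h1 : HasCompactSupport (iteratedFDeriv ℝ n h) := hsupp.iteratedFDeriv n
    have h2 : HasCompactSupport fun x : Euc => ‖iteratedFDeriv ℝ n h x‖ := h1.norm
    exact h2.mul_left
  have hcont : Continuous fun x : Euc => ‖x‖ ^ k * ‖iteratedFDeriv ℝ n h x‖ :=
    (continuous_norm.pow k).mul (hsm.continuous_iteratedFDeriv (mod_cast le_top)).norm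
  obtain ⟨C, hC⟩ := hcont.bounded_above_of_compact_support hcs
  exact ⟨C, fun x => le_trans (le_abs_self _) (hC x)⟩

lemma measure_eq_of_FC (μ ν : Measure Euc) [IsProbabilityMeasure μ] [IsProbabilityMeasure ν]
    (hFC : ∀ w, FC μ w = FC ν w) : μ = ν := by
  have compact_le : ∀ (ρ σ : Measure Euc), IsProbabilityMeasure ρ → IsProbabilityMeasure σ →
      (∀ f : SchwartzMap Euc ℂ, ∫ v, f v ∂ρ = ∫ v, f v ∂σ) →
      ∀ K : Set Euc, IsCompact K → ρ K ≤ σ K := by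
    intro ρ σ hρ hσ hint K hK
    have step : ∀ n : ℕ, ρ K ≤ σ (Metric.cthickening ((n:ℝ)+1)⁻¹ K) := by
      intro n
      have hδ : (0:ℝ) < ((n:ℝ)+1)⁻¹ := by positivity
      obtain ⟨h, hsm, hcs, hK1, h01, hout⟩ := exists_bump K hK hδ
      have hsmC : ContDiff ℝ ∞ fun x => (h x : ℂ) := Complex.ofRealCLM.contDiff.comp hsm
      have hcsC : HasCompactSupport fun x => (h x : ℂ) :=
        hcs.comp_left (g := fun r : ℝ => (r : ℂ)) rfl
      have heq := hint (toSchwartz _ hsmC hcsC)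
      have heq' : ∫ v, h v ∂ρ = ∫ v, h v ∂σ := by
        have e1 : ∫ v, ((h v : ℂ)) ∂ρ = ((∫ v, h v ∂ρ : ℝ) : ℂ) := integral_ofReal
        have e2 : ∫ v, ((h v : ℂ)) ∂σ = ((∫ v, h v ∂σ : ℝ) : ℂ) := integral_ofReal
        have : ((∫ v, h v ∂ρ : ℝ) : ℂ) = ((∫ v, h v ∂σ : ℝ) : ℂ) := by
          rw [← e1, ← e2]; exact heq
        exact_mod_cast this
      have hintρ : Integrable h ρ := hsm.continuous.integrable_of_hasCompactSupport hcs
      have hintσ : Integrable h σ := hsm.continuous.integrable_of_hasCompactSupport hcs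
      have lb : (ρ K).toReal ≤ ∫ v, h v ∂ρ := by
        rw [← measureReal_def, ← MeasureTheory.integral_indicator_one hK.measurableSet]
        refine integral_mono ((integrable_const (1:ℝ)).indicator hK.measurableSet) hintρ ?_
        intro x
        by_cases hx : x ∈ K
        · simp [Set.indicator_of_mem hx, hK1 hx]
        · simp only [Set.indicator_of_notMem hx]
          exact (h01 x).1
      have ub : ∫ v, h v ∂σ ≤ (σ (Metric.cthickening ((n:ℝ)+1)⁻¹ K)).toReal := by
        rw [← measureReal_def, ← MeasureTheory.integral_indicator_one
          (Metric.isClosed_cthickening).measurableSet]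
        refine integral_mono hintσ ((integrable_const (1:ℝ)).indicator
          (Metric.isClosed_cthickening).measurableSet) ?_
        intro x
        by_cases hx : x ∈ Metric.thickening ((n:ℝ)+1)⁻¹ K
        · have : x ∈ Metric.cthickening ((n:ℝ)+1)⁻¹ K :=
            Metric.thickening_subset_cthickening _ _ hx
          simp only [Set.indicator_of_mem this]
          exact (h01 x).2
        · rw [hout x hx]
          by_cases hx2 : x ∈ Metric.cthickening ((n:ℝ)+1)⁻¹ K <;> simp [hx2]
      have : (ρ K).toReal ≤ (σ (Metric.cthickening ((n:ℝ)+1)⁻¹ K)).toReal :=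
        le_trans lb (le_trans (le_of_eq heq') ub)
      exact (ENNReal.toReal_le_toReal (measure_ne_top _ _) (measure_ne_top _ _)).mp this
    have htend : Filter.Tendsto (fun n : ℕ => σ (Metric.cthickening ((n:ℝ)+1)⁻¹ K))
        Filter.atTop (nhds (σ K)) := by
      refine (tendsto_measure_cthickening_of_isClosed ⟨1, one_pos, measure_ne_top _ _⟩
        hK.isClosed).comp ?_
      exact tendsto_one_div_add_atTop_nhds_zero_nat.congr fun n => by rw [one_div]
    exact ge_of_tendsto htend (Filter.Eventually.of_forall step)
  have hSch : ∀ f : SchwartzMap Euc ℂ, ∫ v, f v ∂μ = ∫ v, f v ∂ν :=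
    integral_schwartz_eq μ ν hFC
  have hSch' : ∀ f : SchwartzMap Euc ℂ, ∫ v, f v ∂ν = ∫ v, f v ∂μ := fun f => (hSch f).symm
  have hcompact : ∀ K : Set Euc, IsCompact K → μ K = ν K := fun K hK =>
    le_antisymm (compact_le μ ν ‹_› ‹_› hSch K hK) (compact_le ν μ ‹_› ‹_› hSch' K hK)
  have hclosed : ∀ F : Set Euc, IsClosed F → μ F = ν F := by
    intro F hF
    have hdir : Directed (fun x1 x2 : Set Euc => x1 ⊆ x2)
        (fun n : ℕ => F ∩ Metric.closedBall 0 n) := by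
      intro m n
      refine ⟨max m n, Set.inter_subset_inter_right F ?_, Set.inter_subset_inter_right F ?_⟩
      · exact Metric.closedBall_subset_closedBall (by exact_mod_cast le_max_left m n)
      · exact Metric.closedBall_subset_closedBall (by exact_mod_cast le_max_right m n)
    have hUn : (⋃ n : ℕ, F ∩ Metric.closedBall (0 : Euc) n) = F := by
      ext x
      simp only [Set.mem_iUnion, Set.mem_inter_iff, Metric.mem_closedBall]
      constructor
      · rintro ⟨n, hx, -⟩; exact hx
      · intro hx
        exact ⟨⌈dist x 0⌉₊, hx, Nat.le_ceil _⟩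
    have hcomp : ∀ n : ℕ, IsCompact (F ∩ Metric.closedBall (0 : Euc) n) := fun n =>
      (isCompact_closedBall (0 : Euc) n).inter_left hF
    rw [← hUn, Directed.measure_iUnion hdir, Directed.measure_iUnion hdir]
    exact iSup_congr fun n => hcompact _ (hcomp n)
  refine ext_of_generate_finite {s : Set Euc | IsClosed s} ?_ isPiSystem_isClosed
    (fun s hs => hclosed s hs) (by simp [measure_univ])
  rw [BorelSpace.measurable_eq (α := Euc)]
  exact borel_eq_generateFrom_isClosed


lemma slice_prob (μ : Measure Euc) [IsProbabilityMeasure μ] (θ : Euc) :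
    IsProbabilityMeasure (sliceMeasure μ θ) :=
  Measure.isProbabilityMeasure_map (slice_meas θ).aemeasurable

lemma cramer_wold (μ ν : Measure Euc) [IsProbabilityMeasure μ] [IsProbabilityMeasure ν]
    (h : ∀ θ : Euc, ‖θ‖ = 1 → sliceMeasure μ θ = sliceMeasure ν θ) : μ = ν :=
  measure_eq_of_FC μ ν (fun w => FC_eq_of_slice μ ν h w)

lemma exists_on_family {K : ℕ} (hK : 1 ≤ K) (hKd : K ≤ d) (θ : Euc) (hθ : ‖θ‖ = 1) :
    ∃ f : Fin K → Euc, Orthonormal ℝ f ∧ ∃ k, f k = θ := by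
  have hd : 0 < d := lt_of_lt_of_le hK hKd
  set v : Fin d → Euc := fun _ => θ with hv
  set s : Set (Fin d) := {⟨0, hd⟩} with hs
  have hortho : Orthonormal ℝ (s.restrict v) := by
    rw [orthonormal_iff_ite]
    intro i j
    have : i = j := Subsingleton.elim i j
    subst this
    rw [if_pos rfl]
    show ⟪θ, θ⟫ = 1
    rw [real_inner_self_eq_norm_sq, hθ]
    norm_num
  obtain ⟨b, hb⟩ := hortho.exists_orthonormalBasis_extension_of_card_eq
    (by simp [finrank_euclideanSpace_fin]) (v := v) (s := s)
  refine ⟨b ∘ Fin.castLE hKd, b.orthonormal.comp _ (Fin.castLE_injective hKd), ⟨0, hK⟩, ?_⟩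
  have : Fin.castLE hKd ⟨0, hK⟩ = ⟨0, hd⟩ := rfl
  simp only [Function.comp_apply, this]
  exact hb ⟨0, hd⟩ rfl

end CramerWold

lemma wminkowski {p : ℝ} (hp : 1 ≤ p) {K : ℕ} (a b : Fin K → ℝ≥0∞) (c : ℝ≥0∞) :
    (c * ∑ k, (a k + b k) ^ p) ^ (1/p) ≤
      (c * ∑ k, a k ^ p) ^ (1/p) + (c * ∑ k, b k ^ p) ^ (1/p) := by
  have h1p : (0:ℝ) ≤ 1/p := by positivity
  have hc : ∀ S : ℝ≥0∞, (c * S) ^ (1/p) = c ^ (1/p) * S ^ (1/p) := fun S =>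
    ENNReal.mul_rpow_of_nonneg c S h1p
  rw [hc, hc, hc, ← mul_add]
  exact mul_le_mul_right (ENNReal.Lp_add_le Finset.univ a b hp) _

section MaxKSW
variable {p : ℝ} {d K : ℕ}

lemma le_maxKSW (μ ν : Measure (EuclideanSpace ℝ (Fin d))) (θ : Fin K → EuclideanSpace ℝ (Fin d))
    (hθ : Orthonormal ℝ θ) :
    (((K : ℝ≥0∞))⁻¹ * ∑ k, (Wp p (sliceMeasure μ (θ k)) (sliceMeasure ν (θ k))) ^ p) ^ (1 / p) ≤
      maxKSW p K μ ν :=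
  le_iSup₂ (f := fun (θ : Fin K → EuclideanSpace ℝ (Fin d))
    (_ : θ ∈ {θ : Fin K → EuclideanSpace ℝ (Fin d) | Orthonormal ℝ θ}) =>
    (((K : ℝ≥0∞))⁻¹ * ∑ k, (Wp p (sliceMeasure μ (θ k)) (sliceMeasure ν (θ k))) ^ p) ^ (1 / p))
    θ hθ

lemma maxKSW_le {c : ℝ≥0∞} (μ ν : Measure (EuclideanSpace ℝ (Fin d)))
    (h : ∀ θ : Fin K → EuclideanSpace ℝ (Fin d), Orthonormal ℝ θ →
      (((K : ℝ≥0∞))⁻¹ * ∑ k, (Wp p (sliceMeasure μ (θ k)) (sliceMeasure ν (θ k))) ^ p) ^ (1 / p)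
        ≤ c) :
    maxKSW p K μ ν ≤ c :=
  iSup₂_le h

end MaxKSW

end WassersteinAux

/-- The maximum K-sliced p-Wasserstein distance is a metric on the
Borel probability measures on ℝ^d with finite p-th moments: nonnegative,
symmetric, triangle inequality, and identity of indiscernibles. -/
theorem maxKSW_isMetric {d K : ℕ} (p : ℝ) (hp : 1 ≤ p) (hK : 1 ≤ K) (hKd : K ≤ d) :
    (∀ μ ν : Measure (EuclideanSpace ℝ (Fin d)),
      IsProbabilityMeasure μ → IsProbabilityMeasure ν →
      FiniteMoment p μ → FiniteMoment p ν →
      0 ≤ maxKSW p K μ ν) ∧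
    (∀ μ ν : Measure (EuclideanSpace ℝ (Fin d)),
      IsProbabilityMeasure μ → IsProbabilityMeasure ν →
      FiniteMoment p μ → FiniteMoment p ν →
      maxKSW p K μ ν = maxKSW p K ν μ) ∧
    (∀ μ₁ μ₂ μ₃ : Measure (EuclideanSpace ℝ (Fin d)),
      IsProbabilityMeasure μ₁ → IsProbabilityMeasure μ₂ → IsProbabilityMeasure μ₃ →
      FiniteMoment p μ₁ → FiniteMoment p μ₂ → FiniteMoment p μ₃ →
      maxKSW p K μ₁ μ₃ ≤ maxKSW p K μ₁ μ₂ + maxKSW p K μ₂ μ₃) ∧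
    (∀ μ ν : Measure (EuclideanSpace ℝ (Fin d)),
      IsProbabilityMeasure μ → IsProbabilityMeasure ν →
      FiniteMoment p μ → FiniteMoment p ν →
      (maxKSW p K μ ν = 0 ↔ μ = ν)) := by
  have hp0 : (0:ℝ) < p := lt_of_lt_of_le one_pos hp
  have hp' : (0:ℝ) ≤ p := hp0.le
  have h1p : (0:ℝ) < 1/p := by positivity
  refine ⟨fun μ ν _ _ _ _ => zero_le, ?_, ?_, ?_⟩
  · -- symmetry
    intro μ ν hμ hν _ _
    refine iSup_congr fun θ => iSup_congr fun _ => ?_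
    congr 2
    exact Finset.sum_congr rfl fun k _ => by rw [WpAux.Wp_comm hp']
  · -- triangle
    intro μ₁ μ₂ μ₃ h1 h2 h3 _ _ _
    haveI := h1; haveI := h2; haveI := h3
    refine maxKSW_le _ _ fun θ hθ => ?_
    have tri : ∀ k, Wp p (sliceMeasure μ₁ (θ k)) (sliceMeasure μ₃ (θ k)) ≤
        Wp p (sliceMeasure μ₁ (θ k)) (sliceMeasure μ₂ (θ k)) +
        Wp p (sliceMeasure μ₂ (θ k)) (sliceMeasure μ₃ (θ k)) := by
      intro k
      haveI := slice_prob μ₁ (θ k)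
      haveI := slice_prob μ₂ (θ k)
      haveI := slice_prob μ₃ (θ k)
      exact WpAux.Wp_triangle hp _ _ _
    calc (((K : ℝ≥0∞))⁻¹ *
          ∑ k, (Wp p (sliceMeasure μ₁ (θ k)) (sliceMeasure μ₃ (θ k))) ^ p) ^ (1/p)
        ≤ (((K : ℝ≥0∞))⁻¹ *
          ∑ k, ((Wp p (sliceMeasure μ₁ (θ k)) (sliceMeasure μ₂ (θ k)) +
            Wp p (sliceMeasure μ₂ (θ k)) (sliceMeasure μ₃ (θ k)))) ^ p) ^ (1/p) := by
          refine ENNReal.rpow_le_rpow (mul_le_mul_right (Finset.sum_le_sum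
            fun k _ => ENNReal.rpow_le_rpow (tri k) hp') _) h1p.le
      _ ≤ (((K : ℝ≥0∞))⁻¹ *
            ∑ k, (Wp p (sliceMeasure μ₁ (θ k)) (sliceMeasure μ₂ (θ k))) ^ p) ^ (1/p) +
          (((K : ℝ≥0∞))⁻¹ *
            ∑ k, (Wp p (sliceMeasure μ₂ (θ k)) (sliceMeasure μ₃ (θ k))) ^ p) ^ (1/p) :=
          wminkowski hp _ _ _
      _ ≤ maxKSW p K μ₁ μ₂ + maxKSW p K μ₂ μ₃ :=
          add_le_add (le_maxKSW _ _ θ hθ) (le_maxKSW _ _ θ hθ)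
  · -- identity of indiscernibles
    intro μ ν hμ hν _ _
    haveI := hμ; haveI := hν
    constructor
    · intro h
      refine cramer_wold μ ν fun θ hθ => ?_
      obtain ⟨f, hf, k, hfk⟩ := exists_on_family hK hKd θ hθ
      have hterm : (((K : ℝ≥0∞))⁻¹ *
          ∑ j, (Wp p (sliceMeasure μ (f j)) (sliceMeasure ν (f j))) ^ p) ^ (1/p) = 0 :=
        le_antisymm (le_trans (le_maxKSW _ _ f hf) h.le) zero_le
      rw [ENNReal.rpow_eq_zero_iff] at hterm
      rcases hterm with ⟨hbase, -⟩ | ⟨-, hneg⟩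
      · rcases mul_eq_zero.mp hbase with hinv | hsum
        · exact absurd hinv (by simp [ENNReal.inv_eq_zero, ENNReal.natCast_ne_top])
        · have hk := (Finset.sum_eq_zero_iff.mp hsum) k (Finset.mem_univ k)
          rw [ENNReal.rpow_eq_zero_iff] at hk
          rcases hk with ⟨hW, -⟩ | ⟨-, hneg⟩
          · haveI := slice_prob μ (f k)
            haveI := slice_prob ν (f k)
            have := eq_of_Wp_zero hp _ _ hW
            rwa [hfk] at this
          · linarith
      · linarith
    · intro h
      subst h
      refine le_antisymm (maxKSW_le _ _ fun θ hθ => ?_) zero_le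
      have hz : ∀ k : Fin K, (Wp p (sliceMeasure μ (θ k)) (sliceMeasure μ (θ k))) ^ p = 0 := by
        intro k
        rw [WpAux.Wp_self hp, ENNReal.zero_rpow_of_pos hp0]
      have hsum : (∑ k : Fin K, (Wp p (sliceMeasure μ (θ k)) (sliceMeasure μ (θ k))) ^ p)
          = 0 := Finset.sum_eq_zero fun k _ => hz k
      rw [hsum, mul_zero, ENNReal.zero_rpow_of_pos h1p]
end

section
/- Let 1 ≤ K ≤ d, let A ∈ ℝ^{d×K} satisfy AᵀA = I_K, and let Ψ₁, …, Ψ_K : ℝ → ℝ be differentiable functions. Define T : ℝ^d → ℝ^d by T(x) = A·Ψ(Aᵀx) + x − AAᵀx, where Ψ : ℝ^K → ℝ^K acts componentwise as Ψ(v) = (Ψ₁(v₁), …, Ψ_K(v_K)). Then T is differentiable on ℝ^d and the determinant of its derivative at any x ∈ ℝ^d equals ∏_{k=1}^K Ψ_k'((Aᵀx)_k). -/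
open Matrix

/-- The SINF iteration T(x) = A·Ψ(Aᵀx) + x − AAᵀx, with A having
orthonormal columns and differentiable 1D maps Ψ₁, …, Ψ_K, is differentiable and
its Jacobian determinant at x equals ∏_{k=1}^K Ψ_k'((Aᵀx)_k). -/
theorem sinf_jacobian_det (d K : ℕ) (hK : 1 ≤ K) (hKd : K ≤ d)
    (A : Matrix (Fin d) (Fin K) ℝ) (hA : Aᵀ * A = 1)
    (Ψ : Fin K → ℝ → ℝ) (hΨ : ∀ k, Differentiable ℝ (Ψ k)) :
    Differentiable ℝ (fun x : Fin d → ℝ =>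
        A.mulVec (fun k => Ψ k (Aᵀ.mulVec x k)) + x - A.mulVec (Aᵀ.mulVec x)) ∧
    ∀ x : Fin d → ℝ,
      LinearMap.det
        ((fderiv ℝ (fun x : Fin d → ℝ =>
            A.mulVec (fun k => Ψ k (Aᵀ.mulVec x k)) + x - A.mulVec (Aᵀ.mulVec x)) x)
          : (Fin d → ℝ) →ₗ[ℝ] (Fin d → ℝ))
        = ∏ k : Fin K, deriv (Ψ k) (Aᵀ.mulVec x k) := by
  classical
  have hg : ∀ v : Fin K → ℝ, HasFDerivAt (fun v : Fin K → ℝ => fun k => Ψ k (v k))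
      ((Matrix.toLin' (Matrix.diagonal (fun k => deriv (Ψ k) (v k)))).toContinuousLinearMap) v := by
    intro v
    rw [hasFDerivAt_pi']
    intro i
    have h1 : HasDerivAt (Ψ i) (deriv (Ψ i) (v i)) (v i) := ((hΨ i) (v i)).hasDerivAt
    have hp : HasFDerivAt (fun v : Fin K → ℝ => v i)
        (ContinuousLinearMap.proj i : (Fin K → ℝ) →L[ℝ] ℝ) v :=
      (ContinuousLinearMap.proj i : (Fin K → ℝ) →L[ℝ] ℝ).hasFDerivAt
    have h2 := h1.comp_hasFDerivAt v hp
    refine h2.congr_fderiv ?_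
    ext w
    simp [Matrix.toLin'_apply, Matrix.mulVec_diagonal, mul_comm]
  have key : ∀ x : Fin d → ℝ, HasFDerivAt
      (fun x : Fin d → ℝ => A.mulVec (fun k => Ψ k (Aᵀ.mulVec x k)) + x - A.mulVec (Aᵀ.mulVec x))
      ((Matrix.toLin' (A * Matrix.diagonal (fun k => deriv (Ψ k) (Aᵀ.mulVec x k)) * Aᵀ + 1 - A * Aᵀ)).toContinuousLinearMap) x := by
    intro x
    have hLT : HasFDerivAt (fun x : Fin d → ℝ => Aᵀ.mulVec x)
        ((Matrix.toLin' Aᵀ).toContinuousLinearMap) x :=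
      ((Matrix.toLin' Aᵀ).toContinuousLinearMap).hasFDerivAt
    have h1 := (((Matrix.toLin' A).toContinuousLinearMap).hasFDerivAt).comp x
      ((hg (Aᵀ.mulVec x)).comp x hLT)
    have h3 : HasFDerivAt (fun x : Fin d → ℝ => A.mulVec (Aᵀ.mulVec x))
        ((Matrix.toLin' (A * Aᵀ)).toContinuousLinearMap) x := by
      have := ((Matrix.toLin' (A * Aᵀ)).toContinuousLinearMap).hasFDerivAt (x := x)
      convert this using 1
      funext y
      simp [Matrix.toLin'_apply, Matrix.mulVec_mulVec]
    have h := (h1.add (hasFDerivAt_id x)).sub h3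
    refine h.congr_fderiv ?_
    ext v
    simp [Matrix.toLin'_apply, Matrix.add_mulVec, Matrix.sub_mulVec, Matrix.one_mulVec,
      Matrix.mulVec_mulVec]
  refine ⟨fun x => (key x).differentiableAt, fun x => ?_⟩
  rw [(key x).fderiv]
  have hco : (((Matrix.toLin' (A * Matrix.diagonal (fun k => deriv (Ψ k) (Aᵀ.mulVec x k)) * Aᵀ + 1 - A * Aᵀ)).toContinuousLinearMap : (Fin d → ℝ) →L[ℝ] (Fin d → ℝ)) : (Fin d → ℝ) →ₗ[ℝ] (Fin d → ℝ))
      = Matrix.toLin' (A * Matrix.diagonal (fun k => deriv (Ψ k) (Aᵀ.mulVec x k)) * Aᵀ + 1 - A * Aᵀ) :=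
    LinearMap.coe_toContinuousLinearMap _
  rw [hco, LinearMap.det_toLin']
  set D := Matrix.diagonal (fun k => deriv (Ψ k) (Aᵀ.mulVec x k)) with hD
  have e1 : A * D * Aᵀ + 1 - A * Aᵀ = 1 + (A * (D - 1)) * Aᵀ := by
    rw [Matrix.mul_sub, Matrix.mul_one, Matrix.sub_mul]
    abel
  rw [e1, Matrix.det_one_add_mul_comm, ← Matrix.mul_assoc, hA, Matrix.one_mul]
  have e2 : (1 : Matrix (Fin K) (Fin K) ℝ) + (D - 1) = D := by abel
  rw [e2, hD, Matrix.det_diagonal]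
end

section
/- Let d, m, K ≥ 1, let U, V ∈ ℝ^{d×m}, let A ∈ ℝ^{d×K}, and let τ ∈ ℝ be such that I_d + (τ/2)UVᵀ and I_m + (τ/2)VᵀU are both invertible. Then (I_d + (τ/2)UVᵀ)^{-1}(I_d − (τ/2)UVᵀ)A = A − τ·U·(I_m + (τ/2)VᵀU)^{-1}·Vᵀ·A. -/
open Matrix

/-- Sherman–Morrison–Woodbury form of the Cayley-transform
update: with B = UVᵀ, one has
(I_d + (τ/2)UVᵀ)⁻¹ (I_d − (τ/2)UVᵀ) A = A − τ·U·(I_m + (τ/2)VᵀU)⁻¹·Vᵀ·A,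
provided both I_d + (τ/2)UVᵀ and I_m + (τ/2)VᵀU are invertible. -/
theorem cayley_woodbury (d m K : ℕ) (hd : 1 ≤ d) (hm : 1 ≤ m) (hK : 1 ≤ K)
    (U V : Matrix (Fin d) (Fin m) ℝ) (A : Matrix (Fin d) (Fin K) ℝ) (τ : ℝ)
    (h1 : IsUnit ((1 : Matrix (Fin d) (Fin d) ℝ) + (τ / 2) • (U * Vᵀ)))
    (h2 : IsUnit ((1 : Matrix (Fin m) (Fin m) ℝ) + (τ / 2) • (Vᵀ * U))) :
    ((1 : Matrix (Fin d) (Fin d) ℝ) + (τ / 2) • (U * Vᵀ))⁻¹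
        * ((1 : Matrix (Fin d) (Fin d) ℝ) - (τ / 2) • (U * Vᵀ)) * A
      = A - τ • (U * ((1 : Matrix (Fin m) (Fin m) ℝ) + (τ / 2) • (Vᵀ * U))⁻¹
          * (Vᵀ * A)) := by
  set P : Matrix (Fin d) (Fin d) ℝ := 1 + (τ / 2) • (U * Vᵀ) with hP
  set Q : Matrix (Fin m) (Fin m) ℝ := 1 + (τ / 2) • (Vᵀ * U) with hQ
  have hPdet : IsUnit P.det := (Matrix.isUnit_iff_isUnit_det P).mp h1
  have hQdet : IsUnit Q.det := (Matrix.isUnit_iff_isUnit_det Q).mp h2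
  have hPU : P * U = U * Q := by
    rw [hP, hQ]
    simp [Matrix.add_mul, Matrix.mul_add, Matrix.smul_mul, Matrix.mul_smul, Matrix.mul_assoc]
  have hkey : P * U * Q⁻¹ = U := by
    rw [hPU, Matrix.mul_assoc, Matrix.mul_nonsing_inv Q hQdet, Matrix.mul_one]
  have main : (1 - (τ / 2) • (U * Vᵀ)) * A = P * (A - τ • (U * Q⁻¹ * (Vᵀ * A))) := by
    have h3 : P * (A - τ • (U * Q⁻¹ * (Vᵀ * A))) = P * A - τ • (P * U * Q⁻¹ * (Vᵀ * A)) := by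
      simp [Matrix.mul_sub, Matrix.mul_smul, Matrix.mul_assoc]
    rw [h3, hkey, hP]
    simp only [Matrix.add_mul, Matrix.sub_mul, Matrix.one_mul, Matrix.smul_mul, Matrix.mul_assoc]
    module
  rw [Matrix.mul_assoc, main, ← Matrix.mul_assoc, Matrix.nonsing_inv_mul P hPdet, Matrix.one_mul]
end

section
/- Let μ and ν be Borel probability measures on ℝ, with μ atomless. Let G(x) = μ((−∞, x]) be the CDF of μ, let F(x) = ν((−∞, x]) be the CDF of ν, and define the quantile function F^{-1}(t) = inf{x ∈ ℝ : F(x) ≥ t} for t ∈ (0, 1). Then the pushforward of μ under the map Ψ = F^{-1} ∘ G equals ν. -/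
open MeasureTheory

/-- The cumulative distribution function of a measure on ℝ: F(x) = μ((−∞, x]). -/
noncomputable def mCDF (μ : Measure ℝ) (x : ℝ) : ℝ := (μ (Set.Iic x)).toReal

/-- The quantile function of a measure on ℝ: F⁻¹(t) = inf {x : F(x) ≥ t}. -/
noncomputable def mQuantile (μ : Measure ℝ) (t : ℝ) : ℝ :=
  sInf {x : ℝ | t ≤ mCDF μ x}

open ProbabilityTheory Set Filter Topology

lemma mCDF_eq (μ : Measure ℝ) [IsProbabilityMeasure μ] : mCDF μ = cdf μ :=
  funext fun x => (cdf_eq_real μ x).symm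

/-- The Galois connection between quantile and cdf, for `t ∈ (0,1)`. -/
lemma quantile_le_iff (ν : Measure ℝ) [IsProbabilityMeasure ν] {t y : ℝ}
    (ht0 : 0 < t) (ht1 : t < 1) :
    mQuantile ν t ≤ y ↔ t ≤ mCDF ν y := by
  rw [mQuantile, mCDF_eq]
  set S : Set ℝ := {x : ℝ | t ≤ cdf ν x} with hS
  have hne : S.Nonempty := by
    obtain ⟨x, hx⟩ := ((tendsto_cdf_atTop ν).eventually (lt_mem_nhds ht1)).exists
    exact ⟨x, le_of_lt hx⟩
  have hbdd : BddBelow S := by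
    obtain ⟨x0, hx0⟩ := ((tendsto_cdf_atBot ν).eventually (gt_mem_nhds ht0)).exists
    refine ⟨x0, fun x hx => ?_⟩
    rw [hS, mem_setOf_eq] at hx
    by_contra hlt
    exact absurd (le_trans hx ((monotone_cdf ν) (le_of_not_ge hlt))) (not_le.2 hx0)
  constructor
  · intro h
    have key : t ≤ cdf ν (sInf S) := by
      have hrc : Filter.Tendsto (cdf ν) (𝓝[>] (sInf S)) (𝓝 (cdf ν (sInf S))) :=
        ((cdf ν).right_continuous (sInf S)).mono_left
          (nhdsWithin_mono _ Ioi_subset_Ici_self)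
      refine ge_of_tendsto hrc ?_
      filter_upwards [self_mem_nhdsWithin] with x hx
      obtain ⟨u, huS, hu⟩ := (csInf_lt_iff hbdd hne).1 hx
      rw [hS, mem_setOf_eq] at huS
      exact le_trans huS ((monotone_cdf ν) hu.le)
    exact le_trans key ((monotone_cdf ν) h)
  · intro h
    exact csInf_le hbdd (by rw [hS, mem_setOf_eq]; exact h)

/-- Atomless measures have a continuous cdf (left limits equal values). -/
lemma leftLim_cdf (μ : Measure ℝ) [IsProbabilityMeasure μ] [NullSingletonClass μ] (x : ℝ) :
    Function.leftLim (cdf μ) x = cdf μ x := by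
  have h := (cdf μ).measure_singleton x
  rw [measure_cdf, measure_singleton] at h
  have h' : cdf μ x - Function.leftLim (cdf μ) x ≤ 0 :=
    ENNReal.ofReal_eq_zero.1 h.symm
  have h'' := Monotone.leftLim_le (monotone_cdf μ) (le_refl x)
  linarith

/-- Quantile at nonpositive arguments is 0 (junk value). -/
lemma quantile_of_nonpos (ν : Measure ℝ) [IsProbabilityMeasure ν] {t : ℝ} (ht : t ≤ 0) :
    mQuantile ν t = 0 := by
  have : {x : ℝ | t ≤ mCDF ν x} = univ := by
    ext x
    simp only [mem_setOf_eq, mem_univ, iff_true]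
    exact le_trans ht (by rw [mCDF_eq]; exact cdf_nonneg ν x)
  rw [mQuantile, this, Real.sInf_of_not_bddBelow not_bddBelow_univ]

/-- Quantile above 1 is 0 (junk value). -/
lemma quantile_of_one_lt (ν : Measure ℝ) [IsProbabilityMeasure ν] {t : ℝ} (ht : 1 < t) :
    mQuantile ν t = 0 := by
  have : {x : ℝ | t ≤ mCDF ν x} = ∅ := by
    ext x
    simp only [mem_setOf_eq, mem_empty_iff_false, iff_false, not_le]
    exact lt_of_le_of_lt (by rw [mCDF_eq]; exact cdf_le_one ν x) ht
  rw [mQuantile, this, Real.sInf_empty]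

lemma measurable_mQuantile (ν : Measure ℝ) [IsProbabilityMeasure ν] :
    Measurable (mQuantile ν) := by
  apply measurable_of_Iic
  intro y
  have hset : mQuantile ν ⁻¹' Iic y =
      (Iic 0 ∩ {_t : ℝ | (0:ℝ) ≤ y}) ∪ (Ioo 0 1 ∩ Iic (mCDF ν y)) ∪
      ({1} ∩ {_t : ℝ | mQuantile ν 1 ≤ y}) ∪ (Ioi 1 ∩ {_t : ℝ | (0:ℝ) ≤ y}) := by
    ext t
    simp only [mem_preimage, mem_Iic, mem_union, mem_inter_iff, mem_setOf_eq, mem_Ioo,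
      mem_singleton_iff, mem_Ioi]
    constructor
    · intro h
      rcases le_or_gt t 0 with h0 | h0
      · exact Or.inl (Or.inl (Or.inl ⟨h0, by rwa [quantile_of_nonpos ν h0] at h⟩))
      rcases lt_or_ge t 1 with h1 | h1
      · exact Or.inl (Or.inl (Or.inr ⟨⟨h0, h1⟩, (quantile_le_iff ν h0 h1).1 h⟩))
      rcases eq_or_lt_of_le h1 with h1' | h1'
      · exact Or.inl (Or.inr ⟨h1'.symm, by rwa [h1']⟩)
      · exact Or.inr ⟨h1', by rwa [quantile_of_one_lt ν h1'] at h⟩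
    · rintro (((⟨h0, hy⟩ | ⟨⟨h0, h1⟩, hle⟩) | ⟨h1, hy⟩) | ⟨h1, hy⟩)
      · rw [quantile_of_nonpos ν h0]; exact hy
      · exact (quantile_le_iff ν h0 h1).2 hle
      · rw [h1]; exact hy
      · rw [quantile_of_one_lt ν h1]; exact hy
  rw [hset]
  exact (((measurableSet_Iic.inter (MeasurableSet.const _)).union
    (measurableSet_Ioo.inter measurableSet_Iic)).union
    ((measurableSet_singleton _).inter (MeasurableSet.const _))).union
    (measurableSet_Ioi.inter (MeasurableSet.const _))

lemma measurable_mCDF (μ : Measure ℝ) [IsProbabilityMeasure μ] : Measurable (mCDF μ) := by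
  rw [mCDF_eq]
  exact (monotone_cdf μ).measurable

/-- Probability integral transform core fact: for atomless `μ` and `s ∈ [0,1]`,
`μ {x | cdf μ x ≤ s} = s`. -/
lemma measure_cdf_le (μ : Measure ℝ) [IsProbabilityMeasure μ] [NullSingletonClass μ] {s : ℝ}
    (h0 : 0 ≤ s) (h1 : s ≤ 1) :
    μ {x : ℝ | cdf μ x ≤ s} = ENNReal.ofReal s := by
  rcases eq_or_lt_of_le h1 with h1' | h1'
  · have : {x : ℝ | cdf μ x ≤ s} = univ := by
      ext x
      simp only [mem_setOf_eq, mem_univ, iff_true]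
      rw [h1']; exact cdf_le_one μ x
    rw [this, measure_univ, h1', ENNReal.ofReal_one]
  set A : Set ℝ := {x : ℝ | cdf μ x ≤ s} with hA
  rcases Set.eq_empty_or_nonempty A with hAe | hAne
  · have hs0 : s = 0 := by
      by_contra hs
      have hs' : 0 < s := lt_of_le_of_ne h0 (Ne.symm hs)
      obtain ⟨x, hx⟩ := ((tendsto_cdf_atBot μ).eventually (gt_mem_nhds hs')).exists
      have hxA : x ∈ A := hx.le
      rw [hAe] at hxA
      exact hxA
    rw [hAe, measure_empty, hs0, ENNReal.ofReal_zero]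
  have hbdd : BddAbove A := by
    obtain ⟨x1, hx1⟩ := ((tendsto_cdf_atTop μ).eventually (lt_mem_nhds h1')).exists
    refine ⟨x1, fun x hx => ?_⟩
    rw [hA, mem_setOf_eq] at hx
    by_contra hlt
    exact absurd (lt_of_lt_of_le hx1 ((monotone_cdf μ) (le_of_not_ge hlt))) (not_lt.2 hx)
  set c : ℝ := sSup A with hc
  have hcle : cdf μ c ≤ s := by
    rw [← leftLim_cdf μ c]
    have hlt : ∀ x ∈ Iio c, cdf μ x ≤ s := by
      intro x hx
      obtain ⟨u, huA, hu⟩ := exists_lt_of_lt_csSup hAne hx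
      rw [hA, mem_setOf_eq] at huA
      exact le_trans ((monotone_cdf μ) hu.le) huA
    exact le_of_tendsto ((monotone_cdf μ).tendsto_leftLim c)
      (eventually_nhdsWithin_of_forall hlt)
  have hcge : s ≤ cdf μ c := by
    have hrc : Filter.Tendsto (cdf μ) (𝓝[>] c) (𝓝 (cdf μ c)) :=
      ((cdf μ).right_continuous c).mono_left (nhdsWithin_mono _ Ioi_subset_Ici_self)
    refine ge_of_tendsto hrc ?_
    filter_upwards [self_mem_nhdsWithin] with x hx
    by_contra hlt
    exact absurd (le_csSup hbdd (by rw [hA, mem_setOf_eq]; exact (not_le.1 hlt).le))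
      (not_le.2 hx)
  have hcg : cdf μ c = s := le_antisymm hcle hcge
  have hAIic : A = Iic c := by
    apply Set.Subset.antisymm
    · exact fun x hx => le_csSup hbdd hx
    · intro x hx
      rw [hA, mem_setOf_eq]
      exact le_trans ((monotone_cdf μ) hx) hcg.le
  rw [hAIic, ← ofReal_cdf μ c, hcg]

/-- The set where the cdf reaches 1 is null for an atomless probability measure. -/
lemma measure_one_le_cdf (μ : Measure ℝ) [IsProbabilityMeasure μ] [NullSingletonClass μ] :
    μ {x : ℝ | 1 ≤ cdf μ x} = 0 := by
  have hbound : ∀ n : ℕ, μ {x : ℝ | 1 ≤ cdf μ x} ≤ ENNReal.ofReal (1 / (n + 1)) := by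
    intro n
    have hn0 : (0:ℝ) ≤ 1 - 1 / (n + 1) := by
      have : (1:ℝ) / (n + 1) ≤ 1 := by
        rw [div_le_one (by positivity)]
        linarith [Nat.cast_nonneg (α := ℝ) n]
      linarith
    have hn1 : (1:ℝ) - 1 / (n + 1) ≤ 1 := by
      have : (0:ℝ) < 1 / (n + 1) := by positivity
      linarith
    have hsub : {x : ℝ | 1 ≤ cdf μ x} ⊆ {x : ℝ | cdf μ x ≤ 1 - 1/(n+1)}ᶜ := by
      intro x hx
      simp only [mem_compl_iff, mem_setOf_eq, not_le] at *
      have : (0:ℝ) < 1 / (n + 1) := by positivity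
      linarith
    refine le_trans (measure_mono hsub) ?_
    have hms : MeasurableSet {x : ℝ | cdf μ x ≤ 1 - 1/(n+1)} :=
      (monotone_cdf μ).measurable measurableSet_Iic
    rw [measure_compl hms (measure_ne_top μ _), measure_cdf_le μ hn0 hn1, measure_univ]
    rw [ENNReal.ofReal_sub _ (by positivity), ENNReal.ofReal_one]
    exact le_of_eq (ENNReal.sub_sub_cancel ENNReal.one_ne_top
      (ENNReal.ofReal_le_one.2 (by linarith [show (0:ℝ) < 1/(n+1) by positivity])))
  have htend : Filter.Tendsto (fun n : ℕ => ENNReal.ofReal (1 / (n + 1))) atTop (𝓝 0) := by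
    rw [← ENNReal.ofReal_zero]
    exact ENNReal.tendsto_ofReal tendsto_one_div_add_atTop_nhds_zero_nat
  have := ge_of_tendsto' htend hbound
  simpa using this

/-- For Borel probability measures μ, ν on ℝ with μ atomless, the
pushforward of μ under the 1D optimal transport map Ψ = F⁻¹ ∘ G (where G is the
CDF of μ and F⁻¹ is the quantile function of ν) equals ν. -/
theorem map_quantile_comp_cdf (μ ν : Measure ℝ)
    [IsProbabilityMeasure μ] [IsProbabilityMeasure ν] [NullSingletonClass μ] :
    μ.map (fun x => mQuantile ν (mCDF μ x)) = ν := by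
  have hΨ : Measurable (fun x => mQuantile ν (mCDF μ x)) :=
    (measurable_mQuantile ν).comp (measurable_mCDF μ)
  haveI : IsProbabilityMeasure (μ.map (fun x => mQuantile ν (mCDF μ x))) :=
    Measure.isProbabilityMeasure_map hΨ.aemeasurable
  refine Measure.ext_of_Iic _ _ (fun y => ?_)
  rw [Measure.map_apply hΨ measurableSet_Iic]
  set s : ℝ := cdf ν y with hs
  have hs0 : 0 ≤ s := cdf_nonneg ν y
  have hs1 : s ≤ 1 := cdf_le_one ν y
  -- a.e. the event coincides with {x | cdf μ x ≤ s}
  have hae : ∀ᵐ x ∂μ, 0 < cdf μ x ∧ cdf μ x < 1 := by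
    rw [MeasureTheory.ae_iff]
    have hcompl : {x : ℝ | ¬(0 < cdf μ x ∧ cdf μ x < 1)} ⊆
        {x : ℝ | cdf μ x ≤ 0} ∪ {x : ℝ | 1 ≤ cdf μ x} := by
      intro x hx
      simp only [mem_setOf_eq, not_and_or, not_lt] at hx
      rcases hx with h | h
      · exact Or.inl h
      · exact Or.inr h
    refine measure_mono_null hcompl (measure_union_null ?_ ?_)
    · simpa using measure_cdf_le μ (le_refl (0:ℝ)) zero_le_one
    · exact measure_one_le_cdf μ
  have heq : ((fun x => mQuantile ν (mCDF μ x)) ⁻¹' Iic y) =ᵐ[μ] {x : ℝ | cdf μ x ≤ s} := by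
    rw [Filter.eventuallyEq_set]
    filter_upwards [hae] with x ⟨hx0, hx1⟩
    simp only [mem_preimage, mem_Iic, mem_setOf_eq]
    rw [show mCDF μ x = cdf μ x from congrFun (mCDF_eq μ) x] at *
    rw [quantile_le_iff ν hx0 hx1, hs,
      show mCDF ν y = cdf ν y from congrFun (mCDF_eq ν) y]
  rw [measure_congr heq, measure_cdf_le μ hs0 hs1, hs, ofReal_cdf]
end

section
/- Let p ∈ [1, ∞) and let μ, ν be Borel probability measures on ℝ with finite p-th moments, with CDFs F_μ(x) = μ((−∞, x]) and F_ν(x) = ν((−∞, x]) and quantile functions F_μ^{-1}(t) = inf{x : F_μ(x) ≥ t}, F_ν^{-1}(t) = inf{x : F_ν(x) ≥ t}. Then the p-Wasserstein distance has the closed form W_p(μ, ν)^p = ∫₀¹ |F_μ^{-1}(t) − F_ν^{-1}(t)|^p dt. -/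
set_option maxHeartbeats 1000000


open MeasureTheory ENNReal

/-- A measure on ℝ has finite p-th moment. -/
def FiniteMoment1 (p : ℝ) (μ : Measure ℝ) : Prop :=
  ∫⁻ x, ENNReal.ofReal (|x| ^ p) ∂μ < ⊤

namespace WassersteinAux

open Set Filter Topology ProbabilityTheory intervalIntegral

/-! ### CDF and quantile basics -/


open Set Filter Topology ProbabilityTheory

variable (m : Measure ℝ) [IsProbabilityMeasure m]

lemma mCDF_eq_cdf : mCDF m = cdf m := funext fun x => (cdf_eq_real m x).symm

lemma ofReal_mCDF (x : ℝ) : ENNReal.ofReal (mCDF m x) = m (Iic x) := by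
  rw [mCDF_eq_cdf, ofReal_cdf]

lemma mCDF_mono : Monotone (mCDF m) := by rw [mCDF_eq_cdf]; exact monotone_cdf m

lemma mCDF_nonneg (x : ℝ) : 0 ≤ mCDF m x := by rw [mCDF_eq_cdf]; exact cdf_nonneg m x

lemma mCDF_le_one (x : ℝ) : mCDF m x ≤ 1 := by rw [mCDF_eq_cdf]; exact cdf_le_one m x

variable {m}

lemma nonempty_setOf (t : ℝ) (ht : t < 1) : {x : ℝ | t ≤ mCDF m x}.Nonempty := by
  have h := tendsto_cdf_atTop m
  have : ∀ᶠ x in atTop, t < cdf m x := h.eventually (eventually_gt_nhds ht)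
  obtain ⟨x, hx⟩ := this.exists
  exact ⟨x, by rw [mCDF_eq_cdf]; exact hx.le⟩

lemma bddBelow_setOf (t : ℝ) (ht : 0 < t) : BddBelow {x : ℝ | t ≤ mCDF m x} := by
  have h := tendsto_cdf_atBot m
  have : ∀ᶠ x in atBot, cdf m x < t := h.eventually (eventually_lt_nhds ht)
  obtain ⟨x₀, hx₀⟩ := eventually_atBot.1 this
  refine ⟨x₀, fun y hy => ?_⟩
  by_contra hc
  push_neg at hc
  have := hx₀ y hc.le
  rw [mem_setOf_eq, mCDF_eq_cdf] at hy
  linarith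

lemma le_mCDF_mQuantile' {t : ℝ} (ht0 : 0 < t) (ht1 : t < 1) : t ≤ mCDF m (mQuantile m t) := by
  rw [mCDF_eq_cdf]
  have hne := nonempty_setOf (m := m) t ht1
  have hbd := bddBelow_setOf (m := m) t ht0
  have key : ∀ x, mQuantile m t < x → t ≤ cdf m x := by
    intro x hx
    obtain ⟨s, hs, hsx⟩ := (csInf_lt_iff hbd hne).1 hx
    rw [mem_setOf_eq, mCDF_eq_cdf] at hs
    exact hs.trans (monotone_cdf m hsx.le)
  have hrc : Tendsto (cdf m) (𝓝[>] (mQuantile m t)) (𝓝 (cdf m (mQuantile m t))) :=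
    ((cdf m).right_continuous (mQuantile m t)).tendsto.mono_left
      (nhdsWithin_mono _ Ioi_subset_Ici_self)
  exact ge_of_tendsto hrc (eventually_nhdsWithin_of_forall (fun x hx => key x hx))

lemma mQuantile_le_iff {t : ℝ} (ht0 : 0 < t) (ht1 : t < 1) {x : ℝ} :
    mQuantile m t ≤ x ↔ t ≤ mCDF m x := by
  constructor
  · intro h
    exact (le_mCDF_mQuantile' ht0 ht1).trans (mCDF_mono m (le_of_eq rfl |>.trans h))
  · intro h
    exact csInf_le (bddBelow_setOf t ht0) h

lemma monotoneOn_mQuantile : MonotoneOn (mQuantile m) (Ioo 0 1) := by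
  intro a ha b hb hab
  exact csInf_le_csInf (bddBelow_setOf a ha.1) (nonempty_setOf b hb.2)
    (fun x hx => le_trans hab hx)


/-! ### Inverse transform sampling -/

lemma volume_between {a b : ℝ} (hb : b ≤ 1) {S : Set ℝ}
    (h1 : Ioo a b ⊆ S) (h2 : S ⊆ Ioc a b) : volume S = ENNReal.ofReal (b - a) := by
  refine le_antisymm ?_ ?_
  · calc volume S ≤ volume (Ioc a b) := measure_mono h2
      _ = ENNReal.ofReal (b - a) := Real.volume_Ioc
  · calc ENNReal.ofReal (b - a) = volume (Ioo a b) := Real.volume_Ioo.symm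
      _ ≤ volume S := measure_mono h1

instance : IsProbabilityMeasure (volume.restrict (Ioo (0:ℝ) 1)) := by
  constructor
  rw [Measure.restrict_apply_univ, Real.volume_Ioo]
  norm_num

lemma map_mQuantile (m : Measure ℝ) [IsProbabilityMeasure m] :
    (volume.restrict (Ioo (0:ℝ) 1)).map (mQuantile m) = m := by
  have hae : AEMeasurable (mQuantile m) (volume.restrict (Ioo (0:ℝ) 1)) :=
    aemeasurable_restrict_of_monotoneOn measurableSet_Ioo monotoneOn_mQuantile
  set ρ := volume.restrict (Ioo (0:ℝ) 1) with hρ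
  have hm := hae.measurable_mk
  have he := hae.ae_eq_mk
  rw [Measure.map_congr he]
  haveI : IsProbabilityMeasure (ρ.map hae.mk) := Measure.isProbabilityMeasure_map hm.aemeasurable
  refine Measure.ext_of_Iic _ _ fun x => ?_
  rw [Measure.map_apply hm measurableSet_Iic]
  have hcongr : ρ (hae.mk ⁻¹' Iic x) = ρ {t | mQuantile m t ≤ x} := by
    refine measure_congr ?_
    filter_upwards [he] with t ht
    show (hae.mk (mQuantile m) t ≤ x) = (mQuantile m t ≤ x)
    rw [ht]
  rw [hcongr, hρ, Measure.restrict_apply' measurableSet_Ioo]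
  have hset : {t | mQuantile m t ≤ x} ∩ Ioo 0 1 = Iic (mCDF m x) ∩ Ioo 0 1 := by
    ext t
    simp only [mem_inter_iff, mem_setOf_eq, mem_Iic, and_congr_left_iff, mem_Ioo]
    rintro ⟨ht0, ht1⟩
    exact mQuantile_le_iff ht0 ht1
  rw [hset, ← ofReal_mCDF m x]
  have h1 := mCDF_le_one m x
  have : volume (Iic (mCDF m x) ∩ Ioo 0 1) = ENNReal.ofReal (mCDF m x - 0) := by
    refine volume_between h1 ?_ ?_
    · rintro t ⟨ht0, htc⟩
      exact ⟨htc.le, ht0, htc.trans_le h1⟩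
    · rintro t ⟨htc, ht0, ht1⟩
      exact ⟨ht0, htc⟩
  rwa [sub_zero] at this

/-! ### The layer-cake kernel measure -/


noncomputable def kerM (p : ℝ) : Measure (ℝ × ℝ) :=
  if p = 1 then Measure.map (fun u => (u, u)) volume
  else (volume : Measure (ℝ × ℝ)).withDensity
    ({z : ℝ × ℝ | z.1 < z.2}.indicator fun z => ENNReal.ofReal (p * (p-1) * (z.2 - z.1) ^ (p-2)))

instance (p : ℝ) : SFinite (kerM p) := by unfold kerM; split_ifs <;> infer_instance

lemma measurable_diag : Measurable fun u : ℝ => (u, u) := measurable_id.prodMk measurable_id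

lemma kerM_ae (p : ℝ) : ∀ᵐ z ∂kerM p, z.1 ≤ z.2 := by
  have hs : MeasurableSet {z : ℝ × ℝ | ¬ z.1 ≤ z.2} := by
    simp only [not_le]
    exact measurableSet_lt measurable_snd measurable_fst
  rw [ae_iff]
  unfold kerM
  split_ifs with h
  · rw [Measure.map_apply measurable_diag hs]
    convert measure_empty (μ := (volume : Measure ℝ))
    ext u; simp
  · rw [withDensity_apply _ hs]
    have : ∀ᵐ z ∂(volume : Measure (ℝ×ℝ)), z ∈ {z : ℝ × ℝ | ¬ z.1 ≤ z.2} →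
        ({z : ℝ × ℝ | z.1 < z.2}.indicator fun z => ENNReal.ofReal (p * (p-1) * (z.2 - z.1) ^ (p-2))) z = 0 := by
      refine Filter.Eventually.of_forall fun z hz => ?_
      refine indicator_of_notMem (fun hz' => ?_) _
      exact hz (le_of_lt hz')
    rw [setLIntegral_congr_fun_ae hs this, lintegral_zero]

lemma kerM_apply_of_le {p : ℝ} (hp : 1 ≤ p) {a b : ℝ} (hab : a ≤ b) :
    kerM p {z : ℝ × ℝ | a ≤ z.1 ∧ z.2 < b} = ENNReal.ofReal ((b - a) ^ p) := by
  have hS : MeasurableSet {z : ℝ × ℝ | a ≤ z.1 ∧ z.2 < b} :=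
    (measurableSet_le measurable_const measurable_fst).inter
      (measurableSet_lt measurable_snd measurable_const)
  unfold kerM
  split_ifs with h
  · subst h
    rw [Measure.map_apply measurable_diag hS]
    have : (fun u : ℝ => (u, u)) ⁻¹' {z : ℝ × ℝ | a ≤ z.1 ∧ z.2 < b} = Ico a b := rfl
    rw [this, Real.volume_Ico, Real.rpow_one]
  · have h1 : 1 < p := lt_of_le_of_ne hp (Ne.symm h)
    set g : ℝ × ℝ → ℝ≥0∞ := fun z => ENNReal.ofReal (p * (p-1) * (z.2 - z.1) ^ (p-2)) with hg
    rw [withDensity_apply _ hS, ← lintegral_indicator hS, indicator_indicator]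
    have hWeq : {z : ℝ × ℝ | a ≤ z.1 ∧ z.2 < b} ∩ {z : ℝ × ℝ | z.1 < z.2}
        = {z : ℝ × ℝ | a ≤ z.1 ∧ z.1 < z.2 ∧ z.2 < b} := by
      ext z; simp only [mem_inter_iff, mem_setOf_eq]; tauto
    rw [hWeq]
    set W := {z : ℝ × ℝ | a ≤ z.1 ∧ z.1 < z.2 ∧ z.2 < b} with hW
    have hWm : MeasurableSet W :=
      (measurableSet_le measurable_const measurable_fst).inter
        ((measurableSet_lt measurable_fst measurable_snd).inter
          (measurableSet_lt measurable_snd measurable_const))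
    have hgm : Measurable (W.indicator g) := by
      refine Measurable.indicator ?_ hWm
      fun_prop
    rw [Measure.volume_eq_prod, lintegral_prod _ hgm.aemeasurable]
    have hin : ∀ u : ℝ, ∫⁻ v, W.indicator g (u, v) ∂volume
        = (Ico a b).indicator (fun u => ENNReal.ofReal (p * (b - u) ^ (p-1))) u := by
      intro u
      by_cases hu : u ∈ Ico a b
      · rw [indicator_of_mem hu]
        have hfv : (fun v => W.indicator g (u, v))
            = (Ioo u b).indicator (fun v => ENNReal.ofReal (p * (p-1) * (v - u) ^ (p-2))) := by
          funext v
          by_cases hv : v ∈ Ioo u b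
          · rw [indicator_of_mem hv, indicator_of_mem (show (u,v) ∈ W from ⟨hu.1, hv.1, hv.2⟩)]
          · rw [indicator_of_notMem hv, indicator_of_notMem
              (fun hw => hv ⟨hw.2.1, hw.2.2⟩)]
        rw [hfv, lintegral_indicator measurableSet_Ioo]
        have hub : u ≤ b := hu.2.le
        have hII0 : IntervalIntegrable (fun v => (v - u) ^ (p-2)) volume u b := by
          have := (intervalIntegrable_rpow' (a := 0) (b := b - u)
            (show (-1:ℝ) < p - 2 by linarith)).comp_sub_right u
          simpa using this
        have hII : IntervalIntegrable (fun v => p * (p-1) * (v - u) ^ (p-2)) volume u b :=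
          hII0.const_mul _
        have hInt : IntegrableOn (fun v => p * (p-1) * (v - u) ^ (p-2)) (Ioo u b) volume :=
          ((intervalIntegrable_iff_integrableOn_Ioc_of_le hub).1 hII).mono_set
            Ioo_subset_Ioc_self
        have hnn : 0 ≤ᵐ[volume.restrict (Ioo u b)] fun v => p * (p-1) * (v - u) ^ (p-2) := by
          filter_upwards [ae_restrict_mem measurableSet_Ioo] with v hv
          have h0 : (0:ℝ) ≤ (v - u) ^ (p-2) := Real.rpow_nonneg (by linarith [hv.1]) _
          have hc : (0:ℝ) ≤ p * (p-1) := by nlinarith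
          exact mul_nonneg hc h0
        rw [← ofReal_integral_eq_lintegral_ofReal hInt hnn]
        congr 1
        rw [← integral_Ioc_eq_integral_Ioo, ← intervalIntegral.integral_of_le hu.2.le,
          intervalIntegral.integral_const_mul,
          intervalIntegral.integral_comp_sub_right (fun w => w ^ (p-2)) u]
        simp only [sub_self]
        rw [integral_rpow (Or.inl (by linarith : (-1:ℝ) < p - 2)),
          Real.zero_rpow (by linarith), sub_zero]
        have hp2 : p - 2 + 1 = p - 1 := by ring
        rw [hp2]
        have hne : (p:ℝ) - 1 ≠ 0 := by linarith
        rw [show p * (p-1) * ((b-u) ^ (p-1) / (p-1)) = p * ((p-1) / (p-1) * (b-u) ^ (p-1)) by ring,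
          div_self hne, one_mul]
      · rw [indicator_of_notMem hu]
        have : (fun v => W.indicator g (u, v)) = fun _ => 0 := by
          funext v
          refine indicator_of_notMem (fun hw => hu ⟨hw.1, ?_⟩) _
          exact lt_trans hw.2.1 hw.2.2
        simp [this]
    simp only [hin]
    rw [lintegral_indicator measurableSet_Ico]
    have hII0 : IntervalIntegrable (fun u => (b - u) ^ (p-1)) volume a b := by
      have := ((intervalIntegrable_rpow' (a := b - b) (b := b - a)
        (show (-1:ℝ) < p - 1 by linarith)).comp_sub_left b)
      simpa using this.symm
    have hII : IntervalIntegrable (fun u => p * (b - u) ^ (p-1)) volume a b := hII0.const_mul _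
    have hInt2 : IntegrableOn (fun u => p * (b - u) ^ (p-1)) (Ico a b) volume := by
      have h1 : IntegrableOn (fun u => p * (b - u) ^ (p-1)) (Ioc a b) volume :=
        (intervalIntegrable_iff_integrableOn_Ioc_of_le hab).1 hII
      exact h1.congr_set_ae Ico_ae_eq_Ioc
    have hnn2 : 0 ≤ᵐ[volume.restrict (Ico a b)] fun u => p * (b - u) ^ (p-1) := by
      filter_upwards [ae_restrict_mem measurableSet_Ico] with u hu
      have h0 : (0:ℝ) ≤ (b - u) ^ (p-1) := Real.rpow_nonneg (by linarith [hu.2]) _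
      exact mul_nonneg (by linarith) h0
    rw [← ofReal_integral_eq_lintegral_ofReal hInt2 hnn2]
    congr 1
    rw [setIntegral_congr_set Ico_ae_eq_Ioc, ← intervalIntegral.integral_of_le hab,
      intervalIntegral.integral_const_mul,
      intervalIntegral.integral_comp_sub_left (fun w => w ^ (p-1)) b]
    simp only [sub_self]
    rw [integral_rpow (Or.inl (by linarith : (-1:ℝ) < p - 1))]
    have hp1 : p - 1 + 1 = p := by ring
    rw [hp1, Real.zero_rpow (by linarith), sub_zero]
    rw [show p * ((b-a) ^ p / p) = p / p * (b-a) ^ p by ring, div_self (by linarith : p ≠ 0),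
      one_mul]
  

lemma kerM_rep {p : ℝ} (hp : 1 ≤ p) (a b : ℝ) :
    kerM p {z : ℝ × ℝ | min a b ≤ z.1 ∧ z.2 < max a b} = ENNReal.ofReal (|a - b| ^ p) := by
  rcases le_total a b with h | h
  · rw [min_eq_left h, max_eq_right h, kerM_apply_of_le hp h, abs_sub_comm,
      abs_of_nonneg (sub_nonneg.2 h)]
  · rw [min_eq_right h, max_eq_left h, kerM_apply_of_le hp h,
      abs_of_nonneg (sub_nonneg.2 h)]

/-! ### Tonelli swap -/

lemma lint_ker_swap {α : Type*} [MeasurableSpace α] (ρ : Measure α) [SFinite ρ] (p : ℝ)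
    {f g : α → ℝ} (hf : Measurable f) (hg : Measurable g) :
    ∫⁻ ω, kerM p {z : ℝ × ℝ | min (f ω) (g ω) ≤ z.1 ∧ z.2 < max (f ω) (g ω)} ∂ρ
      = ∫⁻ z, ρ {ω | min (f ω) (g ω) ≤ z.1 ∧ z.2 < max (f ω) (g ω)} ∂kerM p := by
  set U : Set (α × (ℝ × ℝ)) :=
    {w | min (f w.1) (g w.1) ≤ w.2.1 ∧ w.2.2 < max (f w.1) (g w.1)} with hUdef
  have hm1 : Measurable fun w : α × (ℝ × ℝ) => min (f w.1) (g w.1) :=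
    (hf.comp measurable_fst).min (hg.comp measurable_fst)
  have hm2 : Measurable fun w : α × (ℝ × ℝ) => max (f w.1) (g w.1) :=
    (hf.comp measurable_fst).max (hg.comp measurable_fst)
  have hU : MeasurableSet U :=
    (measurableSet_le hm1 measurable_snd.fst).inter (measurableSet_lt measurable_snd.snd hm2)
  have hsec1 : ∀ ω, MeasurableSet {z : ℝ × ℝ | min (f ω) (g ω) ≤ z.1 ∧ z.2 < max (f ω) (g ω)} :=
    fun ω => (measurableSet_le measurable_const measurable_fst).inter
      (measurableSet_lt measurable_snd measurable_const)
  have hsec2 : ∀ z : ℝ × ℝ, MeasurableSet {ω | min (f ω) (g ω) ≤ z.1 ∧ z.2 < max (f ω) (g ω)} :=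
    fun z => (measurableSet_le (hf.min hg) measurable_const).inter
      (measurableSet_lt measurable_const (hf.max hg))
  calc ∫⁻ ω, kerM p {z : ℝ × ℝ | min (f ω) (g ω) ≤ z.1 ∧ z.2 < max (f ω) (g ω)} ∂ρ
      = ∫⁻ ω, ∫⁻ z, U.indicator 1 (ω, z) ∂kerM p ∂ρ := by
        refine lintegral_congr fun ω => ?_
        rw [← lintegral_indicator_one (hsec1 ω)]
        refine lintegral_congr fun z => ?_
        simp only [indicator_apply, hUdef, mem_setOf_eq, Pi.one_apply]
    _ = ∫⁻ z, ∫⁻ ω, U.indicator 1 (ω, z) ∂ρ ∂kerM p :=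
        lintegral_lintegral_swap (measurable_one.indicator hU).aemeasurable
    _ = ∫⁻ z, ρ {ω | min (f ω) (g ω) ≤ z.1 ∧ z.2 < max (f ω) (g ω)} ∂kerM p := by
        refine lintegral_congr fun z => ?_
        rw [← lintegral_indicator_one (hsec2 z)]
        refine lintegral_congr fun ω => ?_
        simp only [indicator_apply, hUdef, mem_setOf_eq, Pi.one_apply]

/-- Decomposition of the layer set into the two "crossing" sets. -/
lemma layer_decomp (u v x y : ℝ) :
    (min x y ≤ u ∧ v < max x y) ↔ ((x ≤ u ∧ v < y) ∨ (y ≤ u ∧ v < x)) := by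
  constructor
  · rintro ⟨h1, h2⟩
    rcases le_total x y with hq | hq
    · rw [min_eq_left hq] at h1; rw [max_eq_right hq] at h2; exact Or.inl ⟨h1, h2⟩
    · rw [min_eq_right hq] at h1; rw [max_eq_left hq] at h2; exact Or.inr ⟨h1, h2⟩
  · rintro (⟨h1, h2⟩ | ⟨h1, h2⟩)
    · exact ⟨(min_le_left _ _).trans h1, h2.trans_le (le_max_right _ _)⟩
    · exact ⟨(min_le_right _ _).trans h1, h2.trans_le (le_max_left _ _)⟩

/-! ### Lower bound for any coupling -/

lemma cost_ge {p : ℝ} (hp : 1 ≤ p) (μ ν : Measure ℝ)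
    [IsProbabilityMeasure μ] [IsProbabilityMeasure ν]
    (γ : Measure (ℝ × ℝ)) (hγ1 : γ.map Prod.fst = μ) (hγ2 : γ.map Prod.snd = ν) :
    ∫⁻ z, (ENNReal.ofReal (mCDF μ z.1 - mCDF ν z.2)
        + ENNReal.ofReal (mCDF ν z.1 - mCDF μ z.2)) ∂kerM p
      ≤ ∫⁻ q, ENNReal.ofReal (|q.1 - q.2| ^ p) ∂γ := by
  haveI : IsProbabilityMeasure γ := by
    constructor
    have h := congrArg (fun m : Measure ℝ => m Set.univ) hγ1
    simp only [Measure.map_apply measurable_fst MeasurableSet.univ, preimage_univ] at h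
    rw [h, measure_univ]
  have step1 : ∫⁻ q, ENNReal.ofReal (|q.1 - q.2| ^ p) ∂γ
      = ∫⁻ q : ℝ × ℝ, kerM p {z : ℝ × ℝ | min q.1 q.2 ≤ z.1 ∧ z.2 < max q.1 q.2} ∂γ :=
    lintegral_congr fun q => (kerM_rep hp q.1 q.2).symm
  rw [step1, lint_ker_swap γ p measurable_fst measurable_snd]
  refine lintegral_mono_ae ?_
  filter_upwards [kerM_ae p] with z hz
  set u := z.1
  set v := z.2
  set A : Set (ℝ × ℝ) := Prod.fst ⁻¹' (Iic u) \ Prod.snd ⁻¹' (Iic v) with hA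
  set B : Set (ℝ × ℝ) := Prod.snd ⁻¹' (Iic u) \ Prod.fst ⁻¹' (Iic v) with hB
  have hdecomp : {q : ℝ × ℝ | min q.1 q.2 ≤ u ∧ v < max q.1 q.2} = A ∪ B := by
    ext q
    simp only [hA, hB, mem_union, mem_diff, mem_preimage, mem_Iic, mem_setOf_eq, not_le]
    exact layer_decomp u v q.1 q.2
  have hdisj : Disjoint A B := by
    rw [Set.disjoint_left]
    rintro q ⟨ha1, ha2⟩ ⟨hb1, hb2⟩
    simp only [mem_preimage, mem_Iic, not_le] at ha1 ha2 hb1 hb2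
    have : u ≤ v := hz
    linarith
  have hBm : MeasurableSet B :=
    (measurable_snd measurableSet_Iic).diff (measurable_fst measurableSet_Iic)
  rw [hdecomp, measure_union hdisj hBm]
  have hmapμ : γ (Prod.fst ⁻¹' (Iic u)) = ENNReal.ofReal (mCDF μ u) := by
    rw [← Measure.map_apply measurable_fst measurableSet_Iic, hγ1, ofReal_mCDF]
  have hmapν : γ (Prod.snd ⁻¹' (Iic u)) = ENNReal.ofReal (mCDF ν u) := by
    rw [← Measure.map_apply measurable_snd measurableSet_Iic, hγ2, ofReal_mCDF]
  have hmapμv : γ (Prod.fst ⁻¹' (Iic v)) = ENNReal.ofReal (mCDF μ v) := by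
    rw [← Measure.map_apply measurable_fst measurableSet_Iic, hγ1, ofReal_mCDF]
  have hmapνv : γ (Prod.snd ⁻¹' (Iic v)) = ENNReal.ofReal (mCDF ν v) := by
    rw [← Measure.map_apply measurable_snd measurableSet_Iic, hγ2, ofReal_mCDF]
  have hAle : ENNReal.ofReal (mCDF μ u - mCDF ν v) ≤ γ A := by
    rw [ENNReal.ofReal_sub _ (mCDF_nonneg ν v), ← hmapμ, ← hmapνv]
    exact le_measure_diff
  have hBle : ENNReal.ofReal (mCDF ν u - mCDF μ v) ≤ γ B := by
    rw [ENNReal.ofReal_sub _ (mCDF_nonneg μ v), ← hmapν, ← hmapμv]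
    exact le_measure_diff
  exact add_le_add hAle hBle

/-! ### The quantile integral computed via the kernel -/

lemma quantile_cost {p : ℝ} (hp : 1 ≤ p) (μ ν : Measure ℝ)
    [IsProbabilityMeasure μ] [IsProbabilityMeasure ν] :
    ∫⁻ t in Ioo (0:ℝ) 1, ENNReal.ofReal (|mQuantile μ t - mQuantile ν t| ^ p)
      = ∫⁻ z, (ENNReal.ofReal (mCDF μ z.1 - mCDF ν z.2)
          + ENNReal.ofReal (mCDF ν z.1 - mCDF μ z.2)) ∂kerM p := by
  set ρ := volume.restrict (Ioo (0:ℝ) 1) with hρ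
  have haeQ : AEMeasurable (mQuantile μ) ρ :=
    aemeasurable_restrict_of_monotoneOn measurableSet_Ioo monotoneOn_mQuantile
  have haeR : AEMeasurable (mQuantile ν) ρ :=
    aemeasurable_restrict_of_monotoneOn measurableSet_Ioo monotoneOn_mQuantile
  set Q₀ := haeQ.mk _ with hQ₀
  set R₀ := haeR.mk _ with hR₀
  have hQm : Measurable Q₀ := haeQ.measurable_mk
  have hRm : Measurable R₀ := haeR.measurable_mk
  have heQ := haeQ.ae_eq_mk
  have heR := haeR.ae_eq_mk
  calc ∫⁻ t in Ioo (0:ℝ) 1, ENNReal.ofReal (|mQuantile μ t - mQuantile ν t| ^ p)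
      = ∫⁻ t, ENNReal.ofReal (|Q₀ t - R₀ t| ^ p) ∂ρ := by
        refine lintegral_congr_ae ?_
        filter_upwards [heQ, heR] with t h1 h2
        rw [h1, h2]
    _ = ∫⁻ t, kerM p {z : ℝ × ℝ | min (Q₀ t) (R₀ t) ≤ z.1 ∧ z.2 < max (Q₀ t) (R₀ t)} ∂ρ :=
        lintegral_congr fun t => (kerM_rep hp _ _).symm
    _ = ∫⁻ z, ρ {t | min (Q₀ t) (R₀ t) ≤ z.1 ∧ z.2 < max (Q₀ t) (R₀ t)} ∂kerM p :=
        lint_ker_swap ρ p hQm hRm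
    _ = ∫⁻ z, (ENNReal.ofReal (mCDF μ z.1 - mCDF ν z.2)
          + ENNReal.ofReal (mCDF ν z.1 - mCDF μ z.2)) ∂kerM p := by
        refine lintegral_congr_ae ?_
        filter_upwards [kerM_ae p] with z hz
        set u := z.1
        set v := z.2
        have hcongr : ρ {t | min (Q₀ t) (R₀ t) ≤ u ∧ v < max (Q₀ t) (R₀ t)}
            = ρ {t | min (mQuantile μ t) (mQuantile ν t) ≤ u
                ∧ v < max (mQuantile μ t) (mQuantile ν t)} := by
          refine measure_congr ?_
          filter_upwards [heQ, heR] with t h1 h2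
          show (min (Q₀ t) (R₀ t) ≤ u ∧ v < max (Q₀ t) (R₀ t))
            = (min (mQuantile μ t) (mQuantile ν t) ≤ u
                ∧ v < max (mQuantile μ t) (mQuantile ν t))
          rw [h1, h2]
        rw [hcongr, hρ, Measure.restrict_apply' measurableSet_Ioo]
        have hFu1 := mCDF_le_one μ u
        have hGu1 := mCDF_le_one ν u
        have hFv0 := mCDF_nonneg μ v
        have hGv0 := mCDF_nonneg ν v
        have hset : {t | min (mQuantile μ t) (mQuantile ν t) ≤ u
              ∧ v < max (mQuantile μ t) (mQuantile ν t)} ∩ Ioo 0 1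
            = (Ioc (mCDF ν v) (mCDF μ u) ∩ Ioo 0 1)
              ∪ (Ioc (mCDF μ v) (mCDF ν u) ∩ Ioo 0 1) := by
          ext t
          simp only [mem_inter_iff, mem_setOf_eq, mem_union, mem_Ioc, mem_Ioo]
          constructor
          · rintro ⟨hcond, ht0, ht1⟩
            rcases (layer_decomp u v _ _).1 hcond with ⟨h1, h2⟩ | ⟨h1, h2⟩
            · refine Or.inl ⟨⟨?_, ?_⟩, ht0, ht1⟩
              · by_contra hc
                push_neg at hc
                exact absurd ((mQuantile_le_iff ht0 ht1).2 hc) (not_le.2 h2)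
              · exact (mQuantile_le_iff ht0 ht1).1 h1
            · refine Or.inr ⟨⟨?_, ?_⟩, ht0, ht1⟩
              · by_contra hc
                push_neg at hc
                exact absurd ((mQuantile_le_iff ht0 ht1).2 hc) (not_le.2 h2)
              · exact (mQuantile_le_iff ht0 ht1).1 h1
          · rintro (⟨⟨hgt, hle⟩, ht0, ht1⟩ | ⟨⟨hgt, hle⟩, ht0, ht1⟩)
            · refine ⟨(layer_decomp u v _ _).2 (Or.inl ⟨?_, ?_⟩), ht0, ht1⟩
              · exact (mQuantile_le_iff ht0 ht1).2 hle
              · by_contra hc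
                push_neg at hc
                exact absurd ((mQuantile_le_iff ht0 ht1).1 hc) (not_le.2 hgt)
            · refine ⟨(layer_decomp u v _ _).2 (Or.inr ⟨?_, ?_⟩), ht0, ht1⟩
              · exact (mQuantile_le_iff ht0 ht1).2 hle
              · by_contra hc
                push_neg at hc
                exact absurd ((mQuantile_le_iff ht0 ht1).1 hc) (not_le.2 hgt)
        rw [hset]
        have hdisj : Disjoint (Ioc (mCDF ν v) (mCDF μ u) ∩ Ioo (0:ℝ) 1)
            (Ioc (mCDF μ v) (mCDF ν u) ∩ Ioo (0:ℝ) 1) := by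
          rw [Set.disjoint_left]
          rintro t ⟨⟨ht1, ht2⟩, _⟩ ⟨⟨ht3, ht4⟩, _⟩
          have hmono : mCDF μ u ≤ mCDF μ v := mCDF_mono μ hz
          linarith
        have hm2 : MeasurableSet (Ioc (mCDF μ v) (mCDF ν u) ∩ Ioo (0:ℝ) 1) :=
          measurableSet_Ioc.inter measurableSet_Ioo
        rw [measure_union hdisj hm2]
        have hval : ∀ c d : ℝ, 0 ≤ c → d ≤ 1 →
            volume (Ioc c d ∩ Ioo 0 1) = ENNReal.ofReal (d - c) := by
          intro c d hc hd
          refine volume_between hd ?_ ?_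
          · rintro t ⟨h1, h2⟩
            exact ⟨⟨h1, h2.le⟩, hc.trans_lt h1, h2.trans_le hd⟩
          · rintro t ⟨h1, _⟩
            exact h1
        rw [hval _ _ hGv0 hFu1, hval _ _ hFv0 hGu1]

/-! ### The quantile coupling -/

lemma exists_coupling (μ ν : Measure ℝ) [IsProbabilityMeasure μ] [IsProbabilityMeasure ν]
    (p : ℝ) :
    ∃ γ : Measure (ℝ × ℝ), γ.map Prod.fst = μ ∧ γ.map Prod.snd = ν ∧
      ∫⁻ q, ENNReal.ofReal (|q.1 - q.2| ^ p) ∂γ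
        = ∫⁻ t in Ioo (0:ℝ) 1, ENNReal.ofReal (|mQuantile μ t - mQuantile ν t| ^ p) := by
  set ρ := volume.restrict (Ioo (0:ℝ) 1) with hρ
  have haeQ : AEMeasurable (mQuantile μ) ρ :=
    aemeasurable_restrict_of_monotoneOn measurableSet_Ioo monotoneOn_mQuantile
  have haeR : AEMeasurable (mQuantile ν) ρ :=
    aemeasurable_restrict_of_monotoneOn measurableSet_Ioo monotoneOn_mQuantile
  set Q₀ := haeQ.mk _ with hQ₀
  set R₀ := haeR.mk _ with hR₀
  have hQm : Measurable Q₀ := haeQ.measurable_mk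
  have hRm : Measurable R₀ := haeR.measurable_mk
  refine ⟨ρ.map (fun t => (Q₀ t, R₀ t)), ?_, ?_, ?_⟩
  · rw [Measure.map_map measurable_fst (hQm.prodMk hRm)]
    have h : (Prod.fst ∘ fun t => (Q₀ t, R₀ t)) = Q₀ := rfl
    rw [h, ← Measure.map_congr haeQ.ae_eq_mk]
    exact map_mQuantile μ
  · rw [Measure.map_map measurable_snd (hQm.prodMk hRm)]
    have h : (Prod.snd ∘ fun t => (Q₀ t, R₀ t)) = R₀ := rfl
    rw [h, ← Measure.map_congr haeR.ae_eq_mk]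
    exact map_mQuantile ν
  · rw [lintegral_map (by fun_prop) (hQm.prodMk hRm)]
    refine lintegral_congr_ae ?_
    filter_upwards [haeQ.ae_eq_mk, haeR.ae_eq_mk] with t h1 h2
    rw [hQ₀, hR₀, ← h1, ← h2]

end WassersteinAux

/-- Closed form of the 1D p-Wasserstein distance via quantile
functions: W_p(μ, ν)^p = ∫₀¹ |F_μ⁻¹(t) − F_ν⁻¹(t)|^p dt. -/
theorem wasserstein_quantile_formula (p : ℝ) (hp : 1 ≤ p) (μ ν : Measure ℝ)
    [IsProbabilityMeasure μ] [IsProbabilityMeasure ν]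
    (hμ : FiniteMoment1 p μ) (hν : FiniteMoment1 p ν) :
    (Wp p μ ν) ^ p
      = ∫⁻ t in Set.Ioo (0 : ℝ) 1,
          ENNReal.ofReal (|mQuantile μ t - mQuantile ν t| ^ p) := by
  have hp0 : (0:ℝ) < p := lt_of_lt_of_le one_pos hp
  set I := ∫⁻ t in Set.Ioo (0:ℝ) 1,
    ENNReal.ofReal (|mQuantile μ t - mQuantile ν t| ^ p) with hI
  obtain ⟨γ₀, hγ₀1, hγ₀2, hγ₀c⟩ := WassersteinAux.exists_coupling μ ν p
  have hup : Wp p μ ν ≤ I ^ (1/p) := by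
    rw [hI, ← hγ₀c]
    unfold Wp
    exact iInf₂_le γ₀ ⟨hγ₀1, hγ₀2⟩
  have hlow : I ^ (1/p) ≤ Wp p μ ν := by
    unfold Wp
    refine le_iInf₂ fun γ hγ => ?_
    refine ENNReal.rpow_le_rpow ?_ (by positivity)
    calc I = ∫⁻ z, (ENNReal.ofReal (mCDF μ z.1 - mCDF ν z.2)
          + ENNReal.ofReal (mCDF ν z.1 - mCDF μ z.2)) ∂(WassersteinAux.kerM p) :=
        WassersteinAux.quantile_cost hp μ ν
      _ ≤ _ := WassersteinAux.cost_ge hp μ ν γ hγ.1 hγ.2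
  have hW : Wp p μ ν = I ^ (1/p) := le_antisymm hup hlow
  rw [hW, ← ENNReal.rpow_mul, one_div_mul_cancel hp0.ne', ENNReal.rpow_one]
end

section
/- Let x_m < x_{m+1} and y_m < y_{m+1} be real numbers and let y_m' > 0 and y_{m+1}' > 0. Set s = (y_{m+1} − y_m)/(x_{m+1} − x_m) and σ = y_{m+1}' + y_m' − 2s. Then for every ξ ∈ [0, 1], the denominator of the rational quadratic spline is strictly positive: s + σ·ξ(1−ξ) > 0. -/
/-- The denominator of the monotonic rational quadratic spline is
strictly positive on the bin: with s = (y_{m+1} − y_m)/(x_{m+1} − x_m) and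
σ = y_{m+1}' + y_m' − 2s, one has s + σ·ξ(1−ξ) > 0 for all ξ ∈ [0, 1]. -/
theorem rqs_denominator_pos (xm xm1 ym ym1 dm dm1 : ℝ)
    (hx : xm < xm1) (hy : ym < ym1) (hdm : 0 < dm) (hdm1 : 0 < dm1) :
    ∀ ξ ∈ Set.Icc (0 : ℝ) 1,
      0 < (ym1 - ym) / (xm1 - xm)
          + (dm1 + dm - 2 * ((ym1 - ym) / (xm1 - xm))) * (ξ * (1 - ξ)) := by
  intro ξ hξ
  obtain ⟨h0, h1⟩ := hξ
  have hs : 0 < (ym1 - ym) / (xm1 - xm) := div_pos (by linarith) (by linarith)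
  have ht : 0 ≤ ξ * (1 - ξ) := mul_nonneg h0 (by linarith)
  nlinarith [sq_nonneg (2 * ξ - 1), mul_pos hs hs,
    mul_nonneg (mul_nonneg hdm.le h0) (by linarith : (0:ℝ) ≤ 1 - ξ),
    mul_nonneg (mul_nonneg hdm1.le h0) (by linarith : (0:ℝ) ≤ 1 - ξ),
    mul_nonneg hs.le (sq_nonneg (2 * ξ - 1))]
end

section
/- Let x_m < x_{m+1} and y_m < y_{m+1} be real numbers and let y_m' > 0 and y_{m+1}' > 0. Set s = (y_{m+1} − y_m)/(x_{m+1} − x_m) and σ = y_{m+1}' + y_m' − 2s, and for x ∈ [x_m, x_{m+1}] set ξ = (x − x_m)/(x_{m+1} − x_m). Then the rational quadratic spline f(x) = y_m + (y_{m+1} − y_m)·(s·ξ² + y_m'·ξ(1−ξ))/(s + σ·ξ(1−ξ)) is differentiable at each x ∈ (x_m, x_{m+1}) with derivative f'(x) = s²·(y_{m+1}'·ξ² + 2s·ξ(1−ξ) + y_m'·(1−ξ)²)/(s + σ·ξ(1−ξ))². -/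
set_option maxHeartbeats 1600000


/-- The monotonic rational quadratic spline
f(x) = y_m + (y_{m+1} − y_m)·(s·ξ² + y_m'·ξ(1−ξ))/(s + σ·ξ(1−ξ)), with
s = (y_{m+1} − y_m)/(x_{m+1} − x_m), σ = y_{m+1}' + y_m' − 2s and
ξ = (x − x_m)/(x_{m+1} − x_m), is differentiable at each x ∈ (x_m, x_{m+1}) with
derivative f'(x) = s²·(y_{m+1}'·ξ² + 2s·ξ(1−ξ) + y_m'·(1−ξ)²)/(s + σ·ξ(1−ξ))². -/
theorem rqs_hasDerivAt (xm xm1 ym ym1 dm dm1 : ℝ)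
    (hx : xm < xm1) (hy : ym < ym1) (hdm : 0 < dm) (hdm1 : 0 < dm1) :
    ∀ x ∈ Set.Ioo xm xm1,
      HasDerivAt
        (fun t : ℝ =>
          ym + (ym1 - ym)
            * (((ym1 - ym) / (xm1 - xm)) * ((t - xm) / (xm1 - xm)) ^ 2
                + dm * (((t - xm) / (xm1 - xm)) * (1 - (t - xm) / (xm1 - xm))))
            / ((ym1 - ym) / (xm1 - xm)
                + (dm1 + dm - 2 * ((ym1 - ym) / (xm1 - xm)))
                  * (((t - xm) / (xm1 - xm)) * (1 - (t - xm) / (xm1 - xm)))))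
        (((ym1 - ym) / (xm1 - xm)) ^ 2
            * (dm1 * ((x - xm) / (xm1 - xm)) ^ 2
                + 2 * ((ym1 - ym) / (xm1 - xm))
                  * (((x - xm) / (xm1 - xm)) * (1 - (x - xm) / (xm1 - xm)))
                + dm * (1 - (x - xm) / (xm1 - xm)) ^ 2)
            / ((ym1 - ym) / (xm1 - xm)
                + (dm1 + dm - 2 * ((ym1 - ym) / (xm1 - xm)))
                  * (((x - xm) / (xm1 - xm)) * (1 - (x - xm) / (xm1 - xm)))) ^ 2)
        x := by
  intro x hxmem
  obtain ⟨h1, h2⟩ := hxmem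
  have hc0 : (0:ℝ) < xm1 - xm := by linarith
  have hcne : xm1 - xm ≠ 0 := ne_of_gt hc0
  set c := xm1 - xm with hc
  set s := (ym1 - ym) / c with hs
  have hs0 : 0 < s := div_pos (by linarith) hc0
  have hξ0 : 0 < (x - xm) / c := div_pos (by linarith) hc0
  have hξ1 : (x - xm) / c < 1 := (div_lt_one hc0).mpr (by linarith)
  set ξ := (x - xm) / c with hξ
  have hsy : ym1 - ym = s * c := by rw [hs]; field_simp
  have hD0 : 0 < s + (dm1 + dm - 2 * s) * (ξ * (1 - ξ)) := by
    nlinarith [mul_pos hξ0 (by linarith : (0:ℝ) < 1 - ξ), sq_nonneg (ξ - 1/2)]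
  have hDne : s + (dm1 + dm - 2 * s) * (ξ * (1 - ξ)) ≠ 0 := ne_of_gt hD0
  have hid : HasDerivAt (fun t : ℝ => (t - xm) / c) (1 / c) x := by
    simpa using ((hasDerivAt_id x).sub_const xm).div_const c
  have h1m : HasDerivAt (fun t : ℝ => 1 - (t - xm) / c) (0 - 1 / c) x :=
    (hasDerivAt_const x 1).sub hid
  have hprod : HasDerivAt (fun t : ℝ => ((t - xm) / c) * (1 - (t - xm) / c))
      (1 / c * (1 - ξ) + ξ * (0 - 1 / c)) x := hid.mul h1m
  have hN : HasDerivAt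
      (fun t : ℝ => (ym1 - ym) * (s * ((t - xm) / c) ^ 2
          + dm * (((t - xm) / c) * (1 - (t - xm) / c))))
      ((ym1 - ym) * (s * ((2 : ℕ) * ξ ^ 1 * (1 / c)) + dm * (1 / c * (1 - ξ) + ξ * (0 - 1 / c)))) x := by
    exact (((hid.pow 2).const_mul s).add (hprod.const_mul dm)).const_mul (ym1 - ym)
  have hDd : HasDerivAt
      (fun t : ℝ => s + (dm1 + dm - 2 * s) * (((t - xm) / c) * (1 - (t - xm) / c)))
      ((dm1 + dm - 2 * s) * (1 / c * (1 - ξ) + ξ * (0 - 1 / c))) x :=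
    (hprod.const_mul (dm1 + dm - 2 * s)).const_add s
  have hf := (hN.div hDd hDne).const_add ym
  rw [← hξ] at hf
  clear_value c s ξ
  refine HasDerivAt.congr_deriv hf ?_
  rw [hsy]
  congr 1
  field_simp
  ring
end

section
/- Let x_m < x_{m+1} and y_m < y_{m+1} be real numbers and let y_m' > 0 and y_{m+1}' > 0. Set s = (y_{m+1} − y_m)/(x_{m+1} − x_m) and σ = y_{m+1}' + y_m' − 2s, and for x ∈ [x_m, x_{m+1}] set ξ = (x − x_m)/(x_{m+1} − x_m). Then the rational quadratic spline f(x) = y_m + (y_{m+1} − y_m)·(s·ξ² + y_m'·ξ(1−ξ))/(s + σ·ξ(1−ξ)) is strictly increasing on [x_m, x_{m+1}], with f(x_m) = y_m and f(x_{m+1}) = y_{m+1}; in particular f is a bijection from [x_m, x_{m+1}] onto [y_m, y_{m+1}]. -/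
lemma rqs_denom_pos (s d0 d1 u : ℝ) (hs : 0 < s) (hd0 : 0 < d0) (hd1 : 0 < d1)
    (hu0 : 0 ≤ u) (hu1 : u ≤ 1) :
    0 < s + (d1 + d0 - 2 * s) * (u * (1 - u)) := by
  nlinarith [sq_nonneg (2*u - 1), mul_nonneg (mul_nonneg hd0.le hu0) (by linarith : (0:ℝ) ≤ 1 - u),
    mul_nonneg (mul_nonneg hd1.le hu0) (by linarith : (0:ℝ) ≤ 1 - u),
    mul_pos hs (show (0:ℝ) < u^2 + (1-u)^2 by nlinarith [sq_nonneg (2*u-1)])]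

lemma rqs_core (s d0 d1 u v : ℝ) (hs : 0 < s) (hd0 : 0 < d0) (hd1 : 0 < d1)
    (hu0 : 0 ≤ u) (hv1 : v ≤ 1) (huv : u < v) :
    (s * u ^ 2 + d0 * (u * (1 - u))) / (s + (d1 + d0 - 2 * s) * (u * (1 - u)))
      < (s * v ^ 2 + d0 * (v * (1 - v))) / (s + (d1 + d0 - 2 * s) * (v * (1 - v))) := by
  have hu1 : u ≤ 1 := le_trans huv.le hv1
  have hv0 : 0 ≤ v := le_trans hu0 huv.le
  have hDu := rqs_denom_pos s d0 d1 u hs hd0 hd1 hu0 hu1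
  have hDv := rqs_denom_pos s d0 d1 v hs hd0 hd1 hv0 hv1
  rw [div_lt_div_iff₀ hDu hDv]
  have hB : 0 < s * (u * (1 - v) + v * (1 - u)) + d0 * ((1 - u) * (1 - v)) + d1 * (u * v) := by
    have h1 : 0 < v * (1 - u) := mul_pos (lt_of_le_of_lt hu0 huv) (by linarith)
    have h2 : 0 ≤ u * (1 - v) := mul_nonneg hu0 (by linarith)
    have h3 : 0 ≤ d0 * ((1 - u) * (1 - v)) :=
      mul_nonneg hd0.le (mul_nonneg (by linarith) (by linarith))
    have h4 : 0 ≤ d1 * (u * v) := mul_nonneg hd1.le (mul_nonneg hu0 hv0)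
    nlinarith [mul_pos hs (by linarith : (0:ℝ) < u * (1 - v) + v * (1 - u))]
  nlinarith [mul_pos (mul_pos hs (by linarith : (0:ℝ) < v - u)) hB]

/-- The monotonic rational quadratic spline
f(x) = y_m + (y_{m+1} − y_m)·(s·ξ² + y_m'·ξ(1−ξ))/(s + σ·ξ(1−ξ)), with
s = (y_{m+1} − y_m)/(x_{m+1} − x_m), σ = y_{m+1}' + y_m' − 2s and
ξ = (x − x_m)/(x_{m+1} − x_m), is strictly increasing on [x_m, x_{m+1}], maps
x_m to y_m and x_{m+1} to y_{m+1}, and is a bijection from [x_m, x_{m+1}] onto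
[y_m, y_{m+1}]. -/
theorem rqs_strictMono_bijOn (xm xm1 ym ym1 dm dm1 : ℝ)
    (hx : xm < xm1) (hy : ym < ym1) (hdm : 0 < dm) (hdm1 : 0 < dm1) :
    let f : ℝ → ℝ := fun t =>
      ym + (ym1 - ym)
        * (((ym1 - ym) / (xm1 - xm)) * ((t - xm) / (xm1 - xm)) ^ 2
            + dm * (((t - xm) / (xm1 - xm)) * (1 - (t - xm) / (xm1 - xm))))
        / ((ym1 - ym) / (xm1 - xm)
            + (dm1 + dm - 2 * ((ym1 - ym) / (xm1 - xm)))
              * (((t - xm) / (xm1 - xm)) * (1 - (t - xm) / (xm1 - xm))))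
    StrictMonoOn f (Set.Icc xm xm1) ∧ f xm = ym ∧ f xm1 = ym1 ∧
      Set.BijOn f (Set.Icc xm xm1) (Set.Icc ym ym1) := by
  intro f
  have hX : (0:ℝ) < xm1 - xm := sub_pos.mpr hx
  have hY : (0:ℝ) < ym1 - ym := sub_pos.mpr hy
  have hs : 0 < (ym1 - ym) / (xm1 - xm) := div_pos hY hX
  set s : ℝ := (ym1 - ym) / (xm1 - xm) with hs_def
  have hxi0 : ∀ t, xm ≤ t → 0 ≤ (t - xm) / (xm1 - xm) := fun t ht =>
    div_nonneg (by linarith) hX.le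
  have hxi1 : ∀ t, t ≤ xm1 → (t - xm) / (xm1 - xm) ≤ 1 := fun t ht => by
    rw [div_le_one hX]; linarith
  -- strict monotone
  have hmono : StrictMonoOn f (Set.Icc xm xm1) := by
    intro a ha b hb hab
    have huv : (a - xm) / (xm1 - xm) < (b - xm) / (xm1 - xm) := by
      apply div_lt_div_of_pos_right _ hX
      · linarith
    have hcore := rqs_core s dm dm1 ((a - xm) / (xm1 - xm)) ((b - xm) / (xm1 - xm))
      hs hdm hdm1 (hxi0 a ha.1) (hxi1 b hb.2) huv
    show ym + (ym1 - ym) * _ / _ < ym + (ym1 - ym) * _ / _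
    rw [mul_div_assoc, mul_div_assoc]
    exact (add_lt_add_iff_left ym).mpr (mul_lt_mul_of_pos_left hcore hY)
  -- endpoints
  have hfxm : f xm = ym := by
    show ym + _ = ym
    rw [sub_self, zero_div]
    norm_num
  have hfxm1 : f xm1 = ym1 := by
    show ym + _ = ym1
    rw [div_self hX.ne']
    have hsne : s ≠ 0 := hs.ne'
    field_simp
    simp only [sub_self, mul_zero, zero_mul, add_zero]
    rw [mul_div_assoc, div_self hY.ne', mul_one]; ring
  -- continuity
  have hDpos : ∀ t ∈ Set.Icc xm xm1,
      s + (dm1 + dm - 2 * s) * (((t - xm) / (xm1 - xm)) * (1 - (t - xm) / (xm1 - xm))) ≠ 0 :=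
    fun t ht => (rqs_denom_pos s dm dm1 _ hs hdm hdm1 (hxi0 t ht.1) (hxi1 t ht.2)).ne'
  have hcont : ContinuousOn f (Set.Icc xm xm1) := by
    apply ContinuousOn.add continuousOn_const
    apply ContinuousOn.div (by fun_prop) (by fun_prop) hDpos
  -- bijOn
  have hmapsTo : Set.MapsTo f (Set.Icc xm xm1) (Set.Icc ym ym1) := by
    intro t ht
    constructor
    · rw [← hfxm]
      exact hmono.monotoneOn (Set.left_mem_Icc.mpr hx.le) ht ht.1
    · rw [← hfxm1]
      exact hmono.monotoneOn ht (Set.right_mem_Icc.mpr hx.le) ht.2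
  have hsurj : Set.SurjOn f (Set.Icc xm xm1) (Set.Icc ym ym1) := by
    have := intermediate_value_Icc hx.le hcont
    rw [hfxm, hfxm1] at this
    exact this
  exact ⟨hmono, hfxm, hfxm1, ⟨hmapsTo, hmono.injOn, hsurj⟩⟩
end
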